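/- arXiv:2107.04273 — 8 statements merged into one kernel-verified Lean document; each statement's English description precedes it below -/
import Mathlib

section
/- Let R be a (not necessarily commutative) unital ring and let a, b be units of R such that (a − 1)² = 0 and (b − 1)² = 0. Set u := a·b (a unit of R). Then both a and b commute with u + u⁻¹, i.e. a·(u + u⁻¹) = (u + u⁻¹)·a and b·(u + u⁻¹) = (u + u⁻¹)·b. -/
/-- If a and b are unipotent units of index 2 of a ring and u = a·b,
then a and b commute with u + u⁻¹. -/
theorem unipotent_prod_commutes_with_add_inv
    (R : Type*) [Ring R] (a b u : Rˣ)
    (ha : ((a : R) - 1) * ((a : R) - 1) = 0)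
    (hb : ((b : R) - 1) * ((b : R) - 1) = 0)
    (hu : u = a * b) :
    (a : R) * ((u : R) + ((u⁻¹ : Rˣ) : R)) = ((u : R) + ((u⁻¹ : Rˣ) : R)) * (a : R) ∧
    (b : R) * ((u : R) + ((u⁻¹ : Rˣ) : R)) = ((u : R) + ((u⁻¹ : Rˣ) : R)) * (b : R) := by
  have h1 : (a : R) * (2 - (a : R)) = 1 := by
    have h : (a : R) * (2 - (a : R)) - 1 = -(((a : R) - 1) * ((a : R) - 1)) := by
      noncomm_ring
    rw [ha] at h
    simpa [sub_eq_zero] using h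
  have h2 : (b : R) * (2 - (b : R)) = 1 := by
    have h : (b : R) * (2 - (b : R)) - 1 = -(((b : R) - 1) * ((b : R) - 1)) := by
      noncomm_ring
    rw [hb] at h
    simpa [sub_eq_zero] using h
  have hainv : ((a⁻¹ : Rˣ) : R) = 2 - (a : R) := Units.inv_eq_of_mul_eq_one_right h1
  have hbinv : ((b⁻¹ : Rˣ) : R) = 2 - (b : R) := Units.inv_eq_of_mul_eq_one_right h2
  have hu' : (u : R) = (a : R) * (b : R) := by rw [hu]; rfl
  have hinv : ((u⁻¹ : Rˣ) : R) = (2 - (b : R)) * (2 - (a : R)) := by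
    rw [hu, mul_inv_rev]
    push_cast
    rw [hainv, hbinv]
  constructor
  · have key : (a : R) * ((u : R) + ((u⁻¹ : Rˣ) : R)) - ((u : R) + ((u⁻¹ : Rˣ) : R)) * (a : R)
        = (((a : R) - 1) * ((a : R) - 1)) * (b : R) - (b : R) * (((a : R) - 1) * ((a : R) - 1)) := by
      rw [hu', hinv]; noncomm_ring
    rw [ha] at key
    simp only [zero_mul, mul_zero, sub_zero] at key
    exact sub_eq_zero.mp key
  · have key : (b : R) * ((u : R) + ((u⁻¹ : Rˣ) : R)) - ((u : R) + ((u⁻¹ : Rˣ) : R)) * (b : R)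
        = (((b : R) - 1) * ((b : R) - 1)) * (a : R) - (a : R) * (((b : R) - 1) * ((b : R) - 1)) := by
      rw [hu', hinv]; noncomm_ring
    rw [hb] at key
    simp only [zero_mul, mul_zero, sub_zero] at key
    exact sub_eq_zero.mp key
end

section
/- Let F be a field of characteristic different from 2, let V be an F-vector space, and let a be an endomorphism of V. Define the endomorphism b of V × V by b(x, y) = (a(x), −a(y)). Then b has the exchange property: there exist subspaces W₁, W₂ of V × V with V × V = W₁ ⊕ W₂, b(W₁) ⊆ W₂ and b(W₂) ⊆ W₁. -/
/-- Over a field of characteristic ≠ 2, the block-diagonal operator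
(x, y) ↦ (a x, -a y) on V × V has the exchange property. -/
theorem diag_neg_diag_exchange
    (F V : Type*) [Field F] [AddCommGroup V] [Module F V]
    (hchar : (2 : F) ≠ 0)
    (a : Module.End F V) (b : Module.End F (V × V))
    (hb : ∀ x y : V, b (x, y) = (a x, - a y)) :
    ∃ W₁ W₂ : Submodule F (V × V), IsCompl W₁ W₂ ∧
      Submodule.map b W₁ ≤ W₂ ∧ Submodule.map b W₂ ≤ W₁ := by
  have hhalf : (2⁻¹ + 2⁻¹ : F) = 1 := by
    rw [← two_mul, mul_inv_cancel₀ hchar]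
  refine ⟨LinearMap.range (LinearMap.prod (LinearMap.id : V →ₗ[F] V) LinearMap.id),
    LinearMap.range (LinearMap.prod (LinearMap.id : V →ₗ[F] V) (-LinearMap.id)), ⟨?_, ?_⟩, ?_, ?_⟩
  · rw [disjoint_iff_inf_le]
    rintro ⟨u, v⟩ ⟨⟨x, hx⟩, ⟨y, hy⟩⟩
    simp only [LinearMap.prod_apply, Function.prod, LinearMap.id_coe, id_eq,
      LinearMap.neg_apply, Prod.mk.injEq] at hx hy
    obtain ⟨rfl, rfl⟩ := hx
    obtain ⟨rfl, h4⟩ := hy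
    have h2 : (2 : F) • y = 0 := by
      rw [two_smul]
      nth_rewrite 1 [← h4]
      exact neg_add_cancel y
    have hy0 : y = 0 := by
      rcases smul_eq_zero.mp h2 with h | h
      · exact absurd h hchar
      · exact h
    simp [hy0, ← h4, Submodule.mem_bot, Prod.ext_iff]
  · rw [codisjoint_iff_le_sup]
    rintro ⟨u, v⟩ -
    have key : (u, v) = ((2⁻¹ : F) • (u + v), (2⁻¹ : F) • (u + v))
        + ((2⁻¹ : F) • (u - v), -((2⁻¹ : F) • (u - v))) := by
      ext
      · show u = (2⁻¹ : F) • (u + v) + (2⁻¹ : F) • (u - v)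
        rw [← smul_add]
        have h : u + v + (u - v) = u + u := by abel
        rw [h, ← two_smul F u, ← mul_smul]
        rw [show (2⁻¹ * 2 : F) = 1 from inv_mul_cancel₀ hchar, one_smul]
      · show v = (2⁻¹ : F) • (u + v) + -((2⁻¹ : F) • (u - v))
        rw [← smul_neg, ← smul_add]
        have h : u + v + -(u - v) = v + v := by abel
        rw [h, ← two_smul F v, ← mul_smul]
        rw [show (2⁻¹ * 2 : F) = 1 from inv_mul_cancel₀ hchar, one_smul]
    rw [key]
    exact Submodule.add_mem_sup ⟨(2⁻¹ : F) • (u + v), rfl⟩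
      ⟨(2⁻¹ : F) • (u - v), by simp [Prod.ext_iff, ← smul_neg, neg_sub]⟩
  · rintro ⟨u, v⟩ ⟨⟨p, q⟩, ⟨x, hx⟩, hbw⟩
    simp only [LinearMap.prod_apply, Function.prod, LinearMap.id_coe, id_eq, Prod.mk.injEq] at hx
    obtain ⟨rfl, rfl⟩ := hx
    rw [hb] at hbw
    exact ⟨a x, by simp [Prod.ext_iff, ← hbw]⟩
  · rintro ⟨u, v⟩ ⟨⟨p, q⟩, ⟨x, hx⟩, hbw⟩
    simp only [LinearMap.prod_apply, Function.prod, LinearMap.id_coe, id_eq,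
      LinearMap.neg_apply, Prod.mk.injEq] at hx
    obtain ⟨rfl, rfl⟩ := hx
    rw [hb] at hbw
    exact ⟨a x, by simp [Prod.ext_iff, ← hbw]⟩
end

section
/- Let A be a unital ring and let a be a unit of A. Then the 2×2 matrix B = [[a, 0], [0, a⁻¹]] over A is the product of two involutory matrices of Mat₂(A) (matrices S with S² = I). Moreover, if a² − 1 is a unit of A, then B is also the product of two unipotent matrices of index 2 of Mat₂(A) (matrices T with (T − I)² = 0). -/
private lemma nilp_aux (A : Type*) [Ring A] (c b x : A) (hcb : c*b=1) (hbc : b*c=1)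
    (hcx : c*x = x*c) (hbx : b*x = x*b) :
    (!![x, -(c*x); b*x, -x] : Matrix (Fin 2) (Fin 2) A) * !![x, -(c*x); b*x, -x] = 0 := by
  have h1 : c*x*(b*x) = x*x := by rw [hcx, mul_assoc, ← mul_assoc c b x, hcb, one_mul]
  have h2 : x*(c*x) = c*x*x := by rw [← mul_assoc, ← hcx]
  have h3 : x*(b*x) = b*x*x := by rw [← mul_assoc, ← hbx]
  have h4 : b*x*(c*x) = x*x := by rw [hbx, mul_assoc, ← mul_assoc b c x, hbc, one_mul]
  ext i j
  fin_cases i <;> fin_cases j <;> simp [Matrix.mul_apply, Fin.sum_univ_two, h1, h2, h3, h4]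

/-- The matrix diag(a, a⁻¹) is the product of two involutory 2×2 matrices; and
if a² - 1 is a unit, it is also the product of two unipotent matrices of index 2. -/
theorem diag_unit_inv_prod_two_involutions_and_unipotents
    (A : Type*) [Ring A] (a : Aˣ) :
    (∃ S T : Matrix (Fin 2) (Fin 2) A, S * S = 1 ∧ T * T = 1 ∧
        !![(a : A), 0; 0, ((a⁻¹ : Aˣ) : A)] = S * T) ∧
    (IsUnit ((a : A) * (a : A) - 1) →
      ∃ S T : Matrix (Fin 2) (Fin 2) A, (S - 1) * (S - 1) = 0 ∧ (T - 1) * (T - 1) = 0 ∧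
        !![(a : A), 0; 0, ((a⁻¹ : Aˣ) : A)] = S * T) := by
  set c : A := (a : A) with hc
  set b : A := ((a⁻¹ : Aˣ) : A) with hb
  have hcb : c * b = 1 := a.mul_inv
  have hbc : b * c = 1 := a.inv_mul
  constructor
  · exact ⟨!![0, c; b, 0], !![0,1;1,0], by
      simp [Matrix.mul_fin_two, Matrix.one_fin_two, hcb, hbc], by
      simp [Matrix.mul_fin_two, Matrix.one_fin_two], by
      simp [Matrix.mul_fin_two]⟩
  · rintro ⟨u, hu⟩
    set v : A := ((u⁻¹ : Aˣ) : A) with hv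
    have huv : (c*c-1) * v = 1 := by rw [← hu]; exact u.mul_inv
    have hvu : v * (c*c-1) = 1 := by rw [← hu]; exact u.inv_mul
    -- c and b commute with v
    have hcu : c * (c*c-1) = (c*c-1) * c := by noncomm_ring
    have hbu : b * (c*c-1) = (c*c-1) * b := by
      rw [mul_sub, sub_mul, mul_one, one_mul, ← mul_assoc, hbc, one_mul, mul_assoc, hcb, mul_one]
    have hcv : c * v = v * c := by
      have : c * v = v * ((c*c-1) * (c * v)) := by rw [← mul_assoc, hvu, one_mul]
      rw [this, ← mul_assoc (c*c-1) c v, ← hcu, mul_assoc c (c*c-1) v, huv, mul_one]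
    have hbv : b * v = v * b := by
      have : b * v = v * ((c*c-1) * (b * v)) := by rw [← mul_assoc, hvu, one_mul]
      rw [this, ← mul_assoc (c*c-1) b v, ← hbu, mul_assoc b (c*c-1) v, huv, mul_one]
    set x : A := (c - 1) * (c - 1) * v with hx
    have hcx : c * x = x * c := by
      rw [hx, ← mul_assoc c ((c-1)*(c-1)) v,
        show c*((c-1)*(c-1)) = (c-1)*(c-1)*c from by noncomm_ring,
        mul_assoc ((c-1)*(c-1)) c v, hcv, ← mul_assoc]
    have hbx : b * x = x * b := by
      have e1 : b * (c-1) = (c-1) * b := by rw [mul_sub, sub_mul, mul_one, one_mul, hbc, hcb]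
      have e2 : b * ((c-1)*(c-1)) = (c-1)*(c-1) * b := by
        rw [← mul_assoc, e1, mul_assoc, e1, ← mul_assoc]
      rw [hx, ← mul_assoc b ((c-1)*(c-1)) v, e2, mul_assoc ((c-1)*(c-1)) b v, hbv,
        ← mul_assoc]
    -- the key identity: c - c*x - 1 = x
    have hK : c - c*x - 1 = x := by
      have h1 : (1 + c) * ((c-1)*(c-1)) = (c - 1) * (c*c-1) := by noncomm_ring
      have h2 : (1 + c) * x = c - 1 := by
        rw [hx, ← mul_assoc, h1, mul_assoc, huv, mul_one]
      linear_combination (norm := noncomm_ring) -h2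
    have hK2 : b + b*x - 1 = -x := by
      have h1 : b * (c - c*x - 1) = b * x := by rw [hK]
      have h2 : b*c - b*(c*x) - b = b*x := by rw [← h1]; noncomm_ring
      rw [hbc, ← mul_assoc, hbc, one_mul] at h2
      linear_combination (norm := noncomm_ring) -h2
    refine ⟨!![c - c*x, -(c*x); b*x, b + b*x], !![1+x, x; -x, 1-x], ?_, ?_, ?_⟩
    · have hM : !![c - c*x, -(c*x); b*x, b + b*x] - 1 =
          (!![x, -(c*x); b*x, -x] : Matrix (Fin 2) (Fin 2) A) := by
        ext i j
        fin_cases i <;> fin_cases j <;>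
          simp [Matrix.one_fin_two, sub_sub_cancel, hK, hK2]
      rw [hM]
      exact nilp_aux A c b x hcb hbc hcx hbx
    · ext i j
      fin_cases i <;> fin_cases j <;>
        simp [Matrix.mul_apply, Matrix.one_fin_two, Fin.sum_univ_two]
    · ext i j
      fin_cases i <;> fin_cases j <;>
        simp [Matrix.mul_apply, Fin.sum_univ_two] <;>
        noncomm_ring
end

section
/- Let A be a unital ring and let a ∈ A. Then the 2×2 matrix B = [[0, −1], [1, a]] over A is the product of two involutory matrices of Mat₂(A) (matrices S with S² = I), and it is also the product of two unipotent matrices of index 2 of Mat₂(A) (matrices T with (T − I)² = 0). -/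
/-- The companion-type matrix [[0, -1], [1, a]] is both the product of two
involutory 2×2 matrices and the product of two unipotent matrices of index 2. -/
theorem companion_prod_two_involutions_and_unipotents
    (A : Type*) [Ring A] (a : A) :
    (∃ S T : Matrix (Fin 2) (Fin 2) A, S * S = 1 ∧ T * T = 1 ∧
        !![(0 : A), -1; 1, a] = S * T) ∧
    (∃ S T : Matrix (Fin 2) (Fin 2) A, (S - 1) * (S - 1) = 0 ∧ (T - 1) * (T - 1) = 0 ∧
        !![(0 : A), -1; 1, a] = S * T) := by
  constructor
  · refine ⟨!![(0:A), 1; 1, 0], !![(1:A), a; 0, -1], ?_, ?_, ?_⟩ <;>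
      ext i j <;> fin_cases i <;> fin_cases j <;>
      simp [Matrix.mul_apply, Fin.sum_univ_two, Matrix.one_apply] <;> norm_num
  · refine ⟨!![(1:A), 0; 2 - a, 1], !![(0:A), -1; 1, 2], ?_, ?_, ?_⟩ <;>
      ext i j <;> fin_cases i <;> fin_cases j <;>
      simp [Matrix.mul_apply, Fin.sum_univ_two, Matrix.one_apply, Matrix.sub_apply] <;> norm_num
end

section
/- Let F be a field, let V be an F-vector space, and let u be a bijective endomorphism of V such that u = a + b for endomorphisms a, b of V with a² = 0 and b² = 0. Then V = ker a ⊕ ker b (internal direct sum), the range of a equals ker a, and the range of b equals ker b. -/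
/-- If a bijective endomorphism u is the sum of two square-zero endomorphisms
a and b, then V = ker a ⊕ ker b, range a = ker a and range b = ker b. -/
theorem bijective_sum_two_square_zero_ker_compl
    (F V : Type*) [Field F] [AddCommGroup V] [Module F V]
    (u a b : Module.End F V)
    (hbij : Function.Bijective u)
    (ha : a * a = 0) (hb : b * b = 0) (hu : u = a + b) :
    IsCompl (LinearMap.ker a) (LinearMap.ker b) ∧
      LinearMap.range a = LinearMap.ker a ∧
      LinearMap.range b = LinearMap.ker b := by
  have hinj : ∀ x : V, a x = 0 → b x = 0 → x = 0 := by
    intro x h1 h2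
    have hux : u x = u 0 := by rw [hu]; simp [h1, h2]
    exact hbij.injective hux
  have haa : ∀ y : V, a (a y) = 0 := by
    intro y
    have := congrArg (fun f : Module.End F V => f y) ha
    simpa [Module.End.mul_apply] using this
  have hbb : ∀ y : V, b (b y) = 0 := by
    intro y
    have := congrArg (fun f : Module.End F V => f y) hb
    simpa [Module.End.mul_apply] using this
  have hra : LinearMap.range a = LinearMap.ker a := by
    apply le_antisymm
    · rintro _ ⟨y, rfl⟩
      exact haa y
    · intro x hx
      obtain ⟨y, rfl⟩ := hbij.surjective x
      rw [LinearMap.mem_ker] at hx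
      have hx' : a (a y) + a (b y) = 0 := by
        rw [← map_add]
        have : u y = a y + b y := by rw [hu]; simp
        rw [← this]; exact hx
      have h1 : a (b y) = 0 := by simpa [haa y] using hx'
      have hby : b y = 0 := hinj _ h1 (hbb y)
      refine ⟨y, ?_⟩
      rw [hu]; simp [hby]
  have hrb : LinearMap.range b = LinearMap.ker b := by
    apply le_antisymm
    · rintro _ ⟨y, rfl⟩
      exact hbb y
    · intro x hx
      obtain ⟨y, rfl⟩ := hbij.surjective x
      rw [LinearMap.mem_ker] at hx
      have hx' : b (a y) + b (b y) = 0 := by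
        rw [← map_add]
        have : u y = a y + b y := by rw [hu]; simp
        rw [← this]; exact hx
      have h1 : b (a y) = 0 := by simpa [hbb y] using hx'
      have hay : a y = 0 := hinj _ (haa y) h1
      refine ⟨y, ?_⟩
      rw [hu]; simp [hay]
  refine ⟨⟨?_, ?_⟩, hra, hrb⟩
  · rw [disjoint_iff_inf_le]
    intro x hx
    exact hinj x hx.1 hx.2
  · rw [codisjoint_iff_le_sup]
    intro x _
    obtain ⟨y, rfl⟩ := hbij.surjective x
    have : u y = a y + b y := by rw [hu]; simp
    rw [this]
    exact Submodule.add_mem_sup (haa y) (hbb y)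
end

section
/- Let F be a field, let V be an F-vector space of countable dimension, and let u be a locally nilpotent endomorphism of V. Then u has the exchange property: there exist subspaces V₁, V₂ of V with V = V₁ ⊕ V₂, u(V₁) ⊆ V₂ and u(V₂) ⊆ V₁. -/
/-
Proof that every locally nilpotent endomorphism of a countable-dimensional
vector space has the exchange property.

Strategy: we look for a pair of submodules (A, B) with u A ≤ B, u B ≤ A,
A ⊓ B = ⊥, A ⊔ B = ⊤.  We build it as an increasing union of
finite-dimensional "valuated pairs", using the transfinite height filtration
V^α given by iterated images of u.
-/

open Submodule

universe uF uV

namespace LNExchange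

variable {F : Type uF} {V : Type uV} [Field F] [AddCommGroup V] [Module F V]

/-- The transfinite filtration by images of `u`. -/
noncomputable def gf (u : Module.End F V) (α : Ordinal.{uV}) : Submodule F V :=
  ⨅ β : {γ : Ordinal.{uV} // γ < α}, (gf u β.1).map u
termination_by α
decreasing_by exact β.2

variable {u : Module.End F V}

theorem mem_gf_iff {x : V} {α : Ordinal.{uV}} :
    x ∈ gf u α ↔ ∀ β < α, x ∈ (gf u β).map u := by
  rw [gf, mem_iInf]
  exact ⟨fun h β hβ => h ⟨β, hβ⟩, fun h β => h β.1 β.2⟩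

theorem gf_anti {α β : Ordinal.{uV}} (h : β ≤ α) : gf u α ≤ gf u β := by
  intro x hx
  rw [mem_gf_iff] at hx ⊢
  exact fun γ hγ => hx γ (lt_of_lt_of_le hγ h)

theorem gf_zero : gf u 0 = ⊤ := by
  ext x; rw [mem_gf_iff]
  simp

theorem gf_succ (α : Ordinal.{uV}) : gf u (α + 1) = (gf u α).map u := by
  apply le_antisymm
  · intro x hx
    rw [mem_gf_iff] at hx
    exact hx α (lt_add_one α)
  · intro x hx
    rw [mem_gf_iff]
    intro β hβ
    exact Submodule.map_mono (gf_anti (Order.lt_succ_iff.mp hβ)) hx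

theorem gf_mem_succ {x : V} {α : Ordinal.{uV}} (h : x ∈ gf u (α + 1)) :
    ∃ c ∈ gf u α, u c = x := by
  rw [gf_succ] at h
  obtain ⟨c, hc, rfl⟩ := h
  exact ⟨c, hc, rfl⟩

theorem u_mem_gf_succ {x : V} {α : Ordinal.{uV}} (h : x ∈ gf u α) :
    u x ∈ gf u (α + 1) := by
  rw [gf_succ]; exact ⟨x, h, rfl⟩

/-- There is a stabilization point of the filtration. -/
theorem exists_stab (u : Module.End F V) : ∃ Λ : Ordinal.{uV}, gf u (Λ + 1) = gf u Λ := by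
  by_contra h
  push_neg at h
  have hstrict : ∀ α β : Ordinal.{uV}, α < β → gf u β < gf u α := by
    intro α β hαβ
    have h1 : gf u β ≤ gf u (α + 1) := gf_anti (Order.add_one_le_iff.mpr hαβ)
    have h2 : gf u (α + 1) ≤ gf u α := gf_anti (le_of_lt (lt_add_one α))
    rcases lt_or_eq_of_le (lt_of_le_of_ne h2 (h α)).le with h3 | h3
    · exact lt_of_le_of_lt h1 (lt_of_le_of_ne h2 (h α))
    · exact lt_of_le_of_lt h1 (lt_of_le_of_ne h2 (h α))
  have hinj : Function.Injective (gf u) := by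
    intro α β hab
    rcases lt_trichotomy α β with h1 | h1 | h1
    · exact absurd hab (ne_of_gt (hstrict α β h1))
    · exact h1
    · exact absurd hab (ne_of_lt (hstrict β α h1))
  exact not_small_ordinal.{uV, uV} (small_of_injective hinj)

/-- A chosen stabilization ordinal. -/
noncomputable def stabOrd (u : Module.End F V) : Ordinal.{uV} :=
  (exists_stab u).choose

theorem stabOrd_spec (u : Module.End F V) : gf u (stabOrd u + 1) = gf u (stabOrd u) :=
  (exists_stab u).choose_spec

/-- The divisible part: the stable value of the filtration. -/
noncomputable def Dd (u : Module.End F V) : Submodule F V := gf u (stabOrd u)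

theorem gf_stab (α : Ordinal.{uV}) (h : stabOrd u ≤ α) : gf u α = Dd u := by
  induction α using Ordinal.induction with
  | h α IH =>
    rcases eq_or_lt_of_le h with h1 | h1
    · rw [← h1]; rfl
    apply le_antisymm
    · have : stabOrd u + 1 ≤ α := Order.add_one_le_iff.mpr h1
      exact le_trans (gf_anti this) (le_of_eq (stabOrd_spec u))
    · intro x hx
      rw [mem_gf_iff]
      intro β hβ
      rcases le_or_gt (stabOrd u) β with h2 | h2
      · rw [IH β hβ h2]
        have : (Dd u).map u = Dd u := by
          have := stabOrd_spec u
          rw [gf_succ] at this; exact this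
        rw [this]; exact hx
      · have : x ∈ gf u (stabOrd u) := hx
        have h3 : x ∈ gf u (β + 1) :=
          gf_anti (Order.add_one_le_iff.mpr h2) this
        rw [gf_succ] at h3
        exact h3

theorem Dd_map : (Dd u).map u = Dd u := by
  have := stabOrd_spec u
  rw [gf_succ] at this
  exact this

theorem Dd_le_gf (α : Ordinal.{uV}) : Dd u ≤ gf u α := by
  rcases le_or_gt (stabOrd u) α with h | h
  · exact le_of_eq (gf_stab α h).symm
  · exact gf_anti h.le

theorem mem_Dd_iff {x : V} : x ∈ Dd u ↔ ∀ α, x ∈ gf u α :=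
  ⟨fun h α => Dd_le_gf α h, fun h => h _⟩


/-! ### Heights -/

/-- Successor on `WithTop Ordinal`. -/
noncomputable def sux (a : WithTop Ordinal.{uV}) : WithTop Ordinal.{uV} :=
  WithTop.map (· + 1) a

@[simp] theorem sux_top : sux (⊤ : WithTop Ordinal.{uV}) = ⊤ := rfl

@[simp] theorem sux_coe (α : Ordinal.{uV}) :
    sux (α : WithTop Ordinal.{uV}) = ((α + 1 : Ordinal) : WithTop Ordinal) := rfl

theorem le_sux (a : WithTop Ordinal.{uV}) : a ≤ sux a := by
  cases a with
  | top => simp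
  | coe α => rw [sux_coe]; exact_mod_cast (le_of_lt (lt_add_one α))

theorem sux_mono {a b : WithTop Ordinal.{uV}} (h : a ≤ b) : sux a ≤ sux b := by
  cases a with
  | top => rw [top_le_iff.mp h]
  | coe α =>
    cases b with
    | top => simp
    | coe β =>
      have : α ≤ β := by exact_mod_cast h
      rw [sux_coe, sux_coe]; exact_mod_cast (add_le_add_left this 1)

open Classical in
/-- The height function. -/
noncomputable def Hv (u : Module.End F V) (x : V) : WithTop Ordinal.{uV} :=
  if x ∈ Dd u then ⊤ else ↑(sSup {α | x ∈ gf u α})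

theorem Hv_eq_top_iff {x : V} : Hv u x = ⊤ ↔ x ∈ Dd u := by
  constructor
  · intro h
    by_contra hx
    rw [Hv, if_neg hx] at h
    exact (WithTop.coe_ne_top h)
  · intro h; rw [Hv, if_pos h]

@[simp] theorem Hv_zero : Hv u (0 : V) = ⊤ :=
  Hv_eq_top_iff.mpr (Dd u).zero_mem

theorem hset_nonempty {x : V} : (({α | x ∈ gf u α}) : Set Ordinal.{uV}).Nonempty :=
  ⟨0, by rw [Set.mem_setOf_eq, gf_zero]; trivial⟩

theorem hset_bdd {x : V} (hx : x ∉ Dd u)  :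
    BddAbove (({α | x ∈ gf u α}) : Set Ordinal.{uV}) := by
  refine ⟨stabOrd u, fun α hα => ?_⟩
  by_contra h
  push_neg at h
  exact hx (by rw [← gf_stab α h.le]; exact hα)

theorem hset_mem_sup {x : V} (hx : x ∉ Dd u) :
    x ∈ gf u (sSup {α | x ∈ gf u α}) := by
  rw [mem_gf_iff]
  intro β hβ
  obtain ⟨α, hα, hβα⟩ := exists_lt_of_lt_csSup hset_nonempty hβ
  have : x ∈ gf u (β + 1) := gf_anti (Order.add_one_le_iff.mpr hβα) hα
  rw [gf_succ] at this
  exact this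

/-- Main membership/height equivalence. -/
theorem mem_gf_iff_le {x : V} {α : Ordinal.{uV}} :
    x ∈ gf u α ↔ (α : WithTop Ordinal) ≤ Hv u x := by
  by_cases hx : x ∈ Dd u
  · simp [Hv, if_pos hx, Dd_le_gf α hx]
  · rw [Hv, if_neg hx, WithTop.coe_le_coe]
    constructor
    · intro h; exact le_csSup (hset_bdd hx) h
    · intro h; exact gf_anti h (hset_mem_sup hx)

theorem not_mem_of_hv_lt {x : V} {α : Ordinal.{uV}} (h : Hv u x < α) :
    x ∉ gf u α := fun hc => absurd (mem_gf_iff_le.mp hc) (not_le_of_gt h)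

theorem mem_hv_self {x : V} (hx : x ∉ Dd u) :
    ∃ α : Ordinal.{uV}, Hv u x = α ∧ x ∈ gf u α ∧ x ∉ gf u (α + 1) := by
  refine ⟨sSup {α | x ∈ gf u α}, by rw [Hv, if_neg hx], hset_mem_sup hx, ?_⟩
  intro hc
  have := le_csSup (hset_bdd hx) (show (sSup {α | x ∈ gf u α}) + 1 ∈
    {α | x ∈ gf u α} from hc)
  exact absurd this (not_le_of_gt (lt_add_one _))

theorem min_le_Hv_add {x y : V} :
    min (Hv u x) (Hv u y) ≤ Hv u (x + y) := by
  rcases min_cases (Hv u x) (Hv u y) with ⟨hm, hle⟩ | ⟨hm, hle'⟩ <;> [skip; (have hle := hle'.le)] <;> rw [hm]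
  · cases hx : Hv u x with
    | top =>
      have hxD : x ∈ Dd u := Hv_eq_top_iff.mp hx
      have hyD : y ∈ Dd u := by
        rw [← Hv_eq_top_iff]; exact top_le_iff.mp (by rw [← hx]; exact hle)
      simp [Hv_eq_top_iff.mpr ((Dd u).add_mem hxD hyD)]
    | coe α =>
      rw [← mem_gf_iff_le]
      have h1 : x ∈ gf u α := mem_gf_iff_le.mpr hx.ge
      have h2 : y ∈ gf u α := mem_gf_iff_le.mpr (by rw [← hx]; exact hle)
      exact (gf u α).add_mem h1 h2
  · cases hy : Hv u y with
    | top =>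
      have hyD : y ∈ Dd u := Hv_eq_top_iff.mp hy
      have hxD : x ∈ Dd u := by
        rw [← Hv_eq_top_iff]; exact top_le_iff.mp (by rw [← hy]; exact hle)
      simp [Hv_eq_top_iff.mpr ((Dd u).add_mem hxD hyD)]
    | coe α =>
      rw [← mem_gf_iff_le]
      have h1 : y ∈ gf u α := mem_gf_iff_le.mpr hy.ge
      have h2 : x ∈ gf u α := mem_gf_iff_le.mpr (by rw [← hy]; exact hle)
      exact (gf u α).add_mem h2 h1

@[simp] theorem Hv_neg {x : V} : Hv u (-x) = Hv u x := by
  have key : ∀ z : V, Hv u z ≤ Hv u (-z) := by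
    intro z
    cases hz : Hv u z with
    | top =>
      simp [Hv_eq_top_iff.mpr ((Dd u).neg_mem (Hv_eq_top_iff.mp hz))]
    | coe α =>
      rw [← mem_gf_iff_le]
      exact (gf u α).neg_mem (mem_gf_iff_le.mpr hz.ge)
  refine le_antisymm ?_ (key x)
  have := key (-x); rwa [neg_neg] at this

theorem Hv_smul {c : F} (hc : c ≠ 0) (x : V) : Hv u (c • x) = Hv u x := by
  have key : ∀ (d : F) (z : V), Hv u z ≤ Hv u (d • z) := by
    intro d z
    cases hz : Hv u z with
    | top =>
      simp [Hv_eq_top_iff.mpr ((Dd u).smul_mem d (Hv_eq_top_iff.mp hz))]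
    | coe α =>
      rw [← mem_gf_iff_le]
      exact (gf u α).smul_mem d (mem_gf_iff_le.mpr hz.ge)
  refine le_antisymm ?_ (key c x)
  have := key c⁻¹ (c • x)
  rwa [inv_smul_smul₀ hc] at this

/-- The exact rule: adding an element of strictly bigger height. -/
theorem Hv_add_exact {x y : V} (h : Hv u y > Hv u x) : Hv u (x + y) = Hv u x := by
  have hmin : min (Hv u x) (Hv u y) = Hv u x := min_eq_left h.le
  refine le_antisymm ?_ (by rw [← hmin]; exact min_le_Hv_add)
  by_contra hc
  push_neg at hc
  have h2 : min (Hv u (x + y)) (Hv u (-y)) ≤ Hv u x := by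
    have h3 := min_le_Hv_add (u := u) (x := x + y) (y := -y)
    rwa [add_neg_cancel_right] at h3
  rcases min_le_iff.mp (by rwa [Hv_neg] at h2) with h2 | h2
  · exact absurd h2 (not_le_of_gt hc)
  · exact absurd h2 (not_le_of_gt h)

theorem Hv_sub_exact {x y : V} (h : Hv u y > Hv u x) : Hv u (x - y) = Hv u x := by
  rw [sub_eq_add_neg]
  exact Hv_add_exact (by rwa [Hv_neg])

theorem sux_Hv_le_u {x : V} : sux (Hv u x) ≤ Hv u (u x) := by
  cases hx : Hv u x with
  | top =>
    have : u x ∈ Dd u := by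
      rw [← Dd_map]; exact ⟨x, Hv_eq_top_iff.mp hx, rfl⟩
    simp [Hv_eq_top_iff.mpr this]
  | coe α =>
    rw [sux_coe, ← mem_gf_iff_le]
    exact u_mem_gf_succ (mem_gf_iff_le.mpr hx.ge)

theorem exists_preimage {y : V} {a : WithTop Ordinal.{uV}} (h : sux a ≤ Hv u y) :
    ∃ c, a ≤ Hv u c ∧ u c = y := by
  cases a with
  | top =>
    have : y ∈ Dd u := Hv_eq_top_iff.mp (top_le_iff.mp (by simpa using h))
    rw [← Dd_map] at this
    obtain ⟨c, hc, hcy⟩ := this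
    exact ⟨c, by simp [Hv_eq_top_iff.mpr hc], hcy⟩
  | coe α =>
    rw [sux_coe, ← mem_gf_iff_le, gf_succ] at h
    obtain ⟨c, hc, hcy⟩ := h
    exact ⟨c, mem_gf_iff_le.mp hc, hcy⟩

/-! ### Spectrum finiteness and maximal height in cosets -/

/-- The set of (ordinal) heights realized in a finite-dimensional submodule is finite. -/
theorem spec_finite (N : Submodule F V) [FiniteDimensional F N] :
    ({α : Ordinal.{uV} | ∃ ζ ∈ N, Hv u ζ = (α : WithTop Ordinal)}).Finite := by
  classical
  set S := {α : Ordinal.{uV} | ∃ ζ ∈ N, Hv u ζ = (α : WithTop Ordinal)} with hS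
  set φ : Ordinal.{uV} → ℕ := fun α => Module.finrank F (N ⊓ gf u α : Submodule F V) with hφ
  have hanti : ∀ α ∈ S, ∀ α' ∈ S, α < α' → φ α' < φ α := by
    intro α hα α' hα' hlt
    obtain ⟨ζ, hζN, hζh⟩ := hα
    have hle : (N ⊓ gf u α' : Submodule F V) ≤ N ⊓ gf u α :=
      inf_le_inf_left N (gf_anti hlt.le)
    have hζmem : ζ ∈ (N ⊓ gf u α : Submodule F V) :=
      ⟨hζN, mem_gf_iff_le.mpr hζh.ge⟩
    have hζnot : ζ ∉ (N ⊓ gf u α' : Submodule F V) := by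
      intro hc
      exact not_mem_of_hv_lt (by rw [hζh]; exact_mod_cast hlt) hc.2
    have hlt2 : (N ⊓ gf u α' : Submodule F V) < N ⊓ gf u α :=
      lt_of_le_of_ne hle (fun h => hζnot (h ▸ hζmem))
    haveI : FiniteDimensional F (N ⊓ gf u α : Submodule F V) :=
      Submodule.finiteDimensional_of_le (inf_le_left : _ ≤ N)
    exact Submodule.finrank_lt_finrank_of_lt hlt2
  have hinj : Set.InjOn φ S := by
    intro α hα α' hα' hEq
    by_contra hne
    rcases lt_or_gt_of_ne hne with h | h
    · exact absurd hEq.symm (ne_of_lt (hanti α hα α' hα' h))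
    · exact absurd hEq (ne_of_lt (hanti α' hα' α hα h))
  have himg : (φ '' S).Finite := Set.Finite.subset (Set.finite_Iic (Module.finrank F N))
    (by
      rintro n ⟨α, hα, rfl⟩
      exact Submodule.finrank_mono (inf_le_left : _ ≤ N))
  exact Set.Finite.of_finite_image himg hinj

/-- Cosets of finite-dimensional submodules contain elements of maximal height. -/
theorem coset_max (N : Submodule F V) [FiniteDimensional F N] (x : V) :
    ∃ m ∈ N, ∀ m' ∈ N, Hv u (x + m') ≤ Hv u (x + m) := by
  classical
  by_cases htop : ∃ m ∈ N, Hv u (x + m) = ⊤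
  · obtain ⟨m, hm, hmt⟩ := htop
    exact ⟨m, hm, fun m' _ => by rw [hmt]; exact le_top⟩
  push_neg at htop
  set N' : Submodule F V := N ⊔ Submodule.span F {x} with hN'
  haveI : FiniteDimensional F N' := by
    exact Submodule.finiteDimensional_sup N _
  set T : Set Ordinal.{uV} := {α | ∃ m ∈ N, Hv u (x + m) = (α : WithTop Ordinal)} with hT
  have hTsub : T ⊆ {α : Ordinal.{uV} | ∃ ζ ∈ N', Hv u ζ = (α : WithTop Ordinal)} := by
    rintro α ⟨m, hm, hh⟩
    refine ⟨x + m, ?_, hh⟩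
    exact N'.add_mem (Submodule.mem_sup_right (Submodule.subset_span rfl))
      (Submodule.mem_sup_left hm)
  have hTfin : T.Finite := Set.Finite.subset (spec_finite N') hTsub
  have hTne : T.Nonempty := by
    cases h0 : Hv u (x + 0) with
    | top => exact absurd h0 (htop 0 N.zero_mem)
    | coe α => exact ⟨α, 0, N.zero_mem, h0⟩
  obtain ⟨αm, hmem, hmax⟩ := Set.Finite.exists_maximalFor id T hTfin hTne
  obtain ⟨m, hm, hh⟩ := hmem
  refine ⟨m, hm, fun m' hm' => ?_⟩
  cases h' : Hv u (x + m') with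
  | top => exact absurd h' (htop m' hm')
  | coe β =>
    have hβT : β ∈ T := ⟨m', hm', h'⟩
    rw [hh, WithTop.coe_le_coe]
    rcases le_or_gt β αm with h1 | h1
    · exact h1
    · exact hmax hβT h1.le

/-! ### Valuated pairs -/

/-- A valuated graded pair for `u`. -/
structure VP (u : Module.End F V) (A B : Submodule F V) : Prop where
  finA : FiniteDimensional F A
  finB : FiniteDimensional F B
  disj : A ⊓ B = ⊥
  mapA : A.map u ≤ B
  mapB : B.map u ≤ A
  val : ∀ a ∈ A, ∀ b ∈ B, Hv u (a + b) = min (Hv u a) (Hv u b)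

theorem VP.symm {A B : Submodule F V} (h : VP u A B) : VP u B A := by
  refine ⟨h.finB, h.finA, by rw [inf_comm]; exact h.disj, h.mapB, h.mapA, ?_⟩
  intro b hb a ha
  rw [add_comm, h.val a ha b hb, min_comm]

theorem VP.bot (u : Module.End F V) : VP u ⊥ ⊥ := by
  refine ⟨inferInstance, inferInstance, by simp, by simp, by simp, ?_⟩
  intro a ha b hb
  rw [Submodule.mem_bot] at ha hb
  subst ha; subst hb; simp

/-- Height of components is at least height of the sum. -/
theorem VP.compA {A B : Submodule F V} (h : VP u A B) {a b : V} (ha : a ∈ A) (hb : b ∈ B) :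
    Hv u (a + b) ≤ Hv u a := by
  rw [h.val a ha b hb]; exact min_le_left _ _

theorem VP.compB {A B : Submodule F V} (h : VP u A B) {a b : V} (ha : a ∈ A) (hb : b ∈ B) :
    Hv u (a + b) ≤ Hv u b := by
  rw [h.val a ha b hb]; exact min_le_right _ _

/-- Valuated independence of a vector over a submodule. -/
def VIndep (u : Module.End F V) (W : Submodule F V) (y : V) : Prop :=
  ∀ w ∈ W, Hv u (y + w) = min (Hv u y) (Hv u w)

/-- Properness implies valuated independence. -/
theorem vindep_of_proper {W : Submodule F V} {y : V}
    (hp : ∀ w ∈ W, Hv u (y + w) ≤ Hv u y) : VIndep u W y := by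
  intro w hw
  rcases lt_or_ge (Hv u w) (Hv u y) with h | h
  · rw [min_eq_right h.le, add_comm]
    exact Hv_add_exact h
  · rw [min_eq_left h]
    exact le_antisymm (hp w hw) (by
      have := min_le_Hv_add (u := u) (x := y) (y := w)
      rwa [min_eq_left h] at this)

theorem mem_sup_span_singleton {A : Submodule F V} {y z : V} :
    z ∈ A ⊔ Submodule.span F {y} ↔ ∃ a ∈ A, ∃ s : F, z = a + s • y := by
  rw [Submodule.mem_sup]
  constructor
  · rintro ⟨a, ha, w, hw, rfl⟩
    obtain ⟨s, rfl⟩ := Submodule.mem_span_singleton.mp hw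
    exact ⟨a, ha, s, rfl⟩
  · rintro ⟨a, ha, s, rfl⟩
    exact ⟨a, ha, s • y, Submodule.mem_span_singleton.mpr ⟨s, rfl⟩, rfl⟩

/-- The master addition lemma: enlarging a valuated pair by two new vectors. -/
theorem VP.add {A B : Submodule F V} (h : VP u A B) {y w : V}
    (hy : u y ∈ B) (hw : u w ∈ A)
    (hJ : ∀ m ∈ A ⊔ B, ∀ s t : F,
      Hv u (m + s • y + t • w) = min (Hv u m) (min (Hv u (s • y)) (Hv u (t • w))))
    (hLI : ∀ m ∈ A ⊔ B, ∀ s t : F, m + s • y + t • w = 0 → s • y = 0 ∧ t • w = 0) :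
    VP u (A ⊔ Submodule.span F {y}) (B ⊔ Submodule.span F {w}) := by
  haveI := h.finA; haveI := h.finB
  refine ⟨Submodule.finiteDimensional_sup _ _, Submodule.finiteDimensional_sup _ _,
      ?_, ?_, ?_, ?_⟩
  · -- disjointness
    rw [eq_bot_iff]
    intro z hz
    obtain ⟨a, ha, s, rfl⟩ := mem_sup_span_singleton.mp hz.1
    obtain ⟨b, hb, t, hEq⟩ := mem_sup_span_singleton.mp hz.2
    have hm : a - b ∈ A ⊔ B :=
      (A ⊔ B).sub_mem (Submodule.mem_sup_left ha) (Submodule.mem_sup_right hb)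
    have h0 : (a - b) + s • y + (-t) • w = 0 := by
      rw [neg_smul]
      have h5 : a + s • y - (b + t • w) = 0 := sub_eq_zero.mpr hEq
      linear_combination (norm := abel_nf) h5
    obtain ⟨h1, h2⟩ := hLI (a - b) hm s (-t) h0
    rw [Submodule.mem_bot]
    have h2' : t • w = 0 := by
      have := h2; rwa [neg_smul, neg_eq_zero] at this
    have hab : a = b := by
      have h4 := h0
      rw [neg_smul, h1, h2', neg_zero, add_zero, add_zero] at h4
      exact sub_eq_zero.mp h4
    have hz0 : a ∈ A ⊓ B := ⟨ha, hab ▸ hb⟩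
    rw [h.disj, Submodule.mem_bot] at hz0
    rw [h1, hz0, zero_add]
  · -- map A' ≤ B'
    rw [Submodule.map_sup]
    refine sup_le (le_trans h.mapA le_sup_left) ?_
    rw [Submodule.map_span]
    refine Submodule.span_le.mpr ?_
    rintro z ⟨z', hz', rfl⟩
    rcases hz' with rfl
    exact le_sup_left (α := Submodule F V) hy  -- u y ∈ B ≤ B ⊔ _
  · -- map B' ≤ A'
    rw [Submodule.map_sup]
    refine sup_le (le_trans h.mapB le_sup_left) ?_
    rw [Submodule.map_span]
    refine Submodule.span_le.mpr ?_
    rintro z ⟨z', hz', rfl⟩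
    rcases hz' with rfl
    exact le_sup_left (α := Submodule F V) hw
  · -- valuation condition
    intro a' ha' b' hb'
    obtain ⟨a, ha, s, rfl⟩ := mem_sup_span_singleton.mp ha'
    obtain ⟨b, hb, t, rfl⟩ := mem_sup_span_singleton.mp hb'
    have hab : a + b ∈ A ⊔ B :=
      (A ⊔ B).add_mem (Submodule.mem_sup_left ha) (Submodule.mem_sup_right hb)
    have e1 : Hv u ((a + s • y) + (b + t • w)) =
        min (min (Hv u a) (Hv u b)) (min (Hv u (s • y)) (Hv u (t • w))) := by
      have := hJ (a + b) hab s t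
      rw [show a + b + s • y + t • w = (a + s • y) + (b + t • w) by abel] at this
      rw [this, h.val a ha b hb]
    have e2 : Hv u (a + s • y) = min (Hv u a) (Hv u (s • y)) := by
      have := hJ a (Submodule.mem_sup_left ha) s 0
      simpa using this
    have e3 : Hv u (b + t • w) = min (Hv u b) (Hv u (t • w)) := by
      have := hJ b (Submodule.mem_sup_right hb) 0 t
      simpa [add_right_comm] using this
    rw [e1, e2, e3]
    rw [inf_assoc, inf_comm (Hv u b), inf_assoc, ← inf_assoc,
      inf_comm (Hv u (t • w)) (Hv u b)]

/-! ### More height helpers -/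

theorem sux_le_of_lt {c d : WithTop Ordinal.{uV}} (h : c < d) : sux c ≤ d := by
  cases c with
  | top => exact absurd h not_top_lt
  | coe γ =>
    cases d with
    | top => simp
    | coe δ =>
      rw [sux_coe, WithTop.coe_le_coe]
      exact Order.add_one_le_iff.mpr (by exact_mod_cast h)

theorem coe_ne_top' (γ : Ordinal.{uV}) : (γ : WithTop Ordinal.{uV}) ≠ ⊤ :=
  WithTop.coe_ne_top

theorem vindep_top {W : Submodule F V} {y : V} (hy : Hv u y = ⊤) : VIndep u W y := by
  intro w hw
  rw [hy, min_eq_right le_top]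
  rcases eq_or_lt_of_le (le_top : Hv u w ≤ ⊤) with h | h
  · have hyD : y ∈ Dd u := Hv_eq_top_iff.mp hy
    have hwD : w ∈ Dd u := Hv_eq_top_iff.mp h
    rw [Hv_eq_top_iff.mpr ((Dd u).add_mem hyD hwD), h]
  · rw [add_comm]
    exact Hv_add_exact (by rw [hy]; exact h)

theorem VIndep.smul {W : Submodule F V} {y : V} (h : VIndep u W y) {t : F} (ht : t ≠ 0) :
    VIndep u W (t • y) := by
  intro w hw
  have h1 : t • y + w = t • (y + t⁻¹ • w) := by
    rw [smul_add, smul_inv_smul₀ ht]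
  rw [h1, Hv_smul ht, h _ (W.smul_mem _ hw), Hv_smul ht, Hv_smul (inv_ne_zero ht)]

theorem VIndep.smul_formula {W : Submodule F V} {y : V} (h : VIndep u W y) (s : F)
    (m : V) (hm : m ∈ W) :
    Hv u (s • y + m) = min (Hv u (s • y)) (Hv u m) := by
  by_cases hs : s = 0
  · rw [hs, zero_smul, zero_add, Hv_zero, min_eq_right le_top]
  · exact (h.smul hs) m hm

theorem min_le_Hv_sub {x y : V} : min (Hv u x) (Hv u y) ≤ Hv u (x - y) := by
  rw [sub_eq_add_neg]
  have := min_le_Hv_add (u := u) (x := x) (y := -y)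
  rwa [Hv_neg] at this

/-- `VIndep` gives the exact formula also in subtracted/rearranged forms. -/
theorem VIndep.formula {W : Submodule F V} {y : V} (h : VIndep u W y)
    (w : V) (hw : w ∈ W) : Hv u (w + y) = min (Hv u y) (Hv u w) := by
  rw [add_comm]; exact h w hw

/-! ### The context of the one-step extension -/

variable (u) in
/-- `Z`-submodule measuring reachability. -/
noncomputable def Zsub (A B : Submodule F V) (αo : Ordinal.{uV}) : Submodule F V :=
  gf u (αo + 1 + 1) ⊔ Submodule.map u ((A ⊔ B) ⊓ gf u αo)

/-- Context: a valuated pair together with a proper coset representative of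
finite height and the decomposition of its image. -/
structure Ctx (u : Module.End F V) (A B : Submodule F V)
    (xs a b : V) (αo : Ordinal.{uV}) : Prop where
  vp : VP u A B
  hxs : xs ∉ A ⊔ B
  hH : Hv u xs = (αo : WithTop Ordinal)
  prop : ∀ m ∈ A ⊔ B, Hv u (xs + m) ≤ (αo : WithTop Ordinal)
  haA : a ∈ A
  hbB : b ∈ B
  dec : u xs = a + b

namespace Ctx

variable {A B : Submodule F V} {xs a b : V} {αo : Ordinal.{uV}}

theorem M_fin (c : Ctx u A B xs a b αo) : FiniteDimensional F (A ⊔ B : Submodule F V) := by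
  haveI := c.vp.finA; haveI := c.vp.finB
  exact Submodule.finiteDimensional_sup _ _

theorem uM_le (_ : Ctx u A B xs a b αo) {h : VP u A B} :
    (A ⊔ B).map u ≤ A ⊔ B := by
  rw [Submodule.map_sup]
  exact sup_le (le_trans h.mapA le_sup_right) (le_trans h.mapB le_sup_left)

theorem vxs (c : Ctx u A B xs a b αo) : VIndep u (A ⊔ B) xs :=
  vindep_of_proper (by rw [c.hH]; exact c.prop)

theorem hHa (c : Ctx u A B xs a b αo) :
    ((αo + 1 : Ordinal) : WithTop Ordinal) ≤ Hv u a := by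
  have h1 : ((αo + 1 : Ordinal) : WithTop Ordinal) ≤ Hv u (u xs) := by
    have := sux_Hv_le_u (u := u) (x := xs)
    rwa [c.hH, sux_coe] at this
  calc ((αo + 1 : Ordinal) : WithTop Ordinal) ≤ Hv u (a + b) := by rwa [← c.dec]
    _ ≤ Hv u a := c.vp.compA c.haA c.hbB

theorem hHb (c : Ctx u A B xs a b αo) :
    ((αo + 1 : Ordinal) : WithTop Ordinal) ≤ Hv u b := by
  have h1 : ((αo + 1 : Ordinal) : WithTop Ordinal) ≤ Hv u (u xs) := by
    have := sux_Hv_le_u (u := u) (x := xs)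
    rwa [c.hH, sux_coe] at this
  calc ((αo + 1 : Ordinal) : WithTop Ordinal) ≤ Hv u (a + b) := by rwa [← c.dec]
    _ ≤ Hv u b := c.vp.compB c.haA c.hbB

/-- Decomposition of an element of `M` into components, with height bounds. -/
theorem decompM (c : Ctx u A B xs a b αo) {m : V} (hm : m ∈ A ⊔ B) :
    ∃ mA ∈ A, ∃ mB ∈ B, m = mA + mB ∧ Hv u m ≤ Hv u mA ∧ Hv u m ≤ Hv u mB := by
  obtain ⟨mA, hmA, mB, hmB, rfl⟩ := Submodule.mem_sup.mp hm
  exact ⟨mA, hmA, mB, hmB, rfl, c.vp.compA hmA hmB, c.vp.compB hmA hmB⟩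

/-- Symmetric context. -/
theorem symm (c : Ctx u A B xs a b αo) : Ctx u B A xs b a αo :=
  ⟨c.vp.symm, by rw [sup_comm]; exact c.hxs, c.hH,
    by rw [sup_comm]; exact c.prop,
    c.hbB, c.haA, by rw [add_comm]; exact c.dec⟩

/-- Key min computation. -/
theorem key1 {m w : V} {γ : Ordinal.{uV}} (hw : (γ : WithTop Ordinal) ≤ Hv u w) :
    min (γ : WithTop Ordinal) (Hv u (m + w)) = min (Hv u m) (γ : WithTop Ordinal) := by
  rcases lt_or_ge (Hv u m) (γ : WithTop Ordinal) with h | h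
  · rw [Hv_add_exact (lt_of_lt_of_le h hw), min_comm]
  · rw [min_eq_right h, min_eq_left]
    exact le_trans (le_min h hw) min_le_Hv_add

/-- The joint valuation formula for the two new vectors. -/
theorem joint {A B : Submodule F V} {xs a b : V} {αo : Ordinal.{uV}}
    (c : Ctx u A B xs a b αo) {y d : V}
    (hviy : VIndep u ((A ⊔ B) ⊔ Submodule.span F {xs}) y)
    (hθ : (αo : WithTop Ordinal) ≤ Hv u y)
    (hd : d ∈ (A ⊔ B) ⊓ gf u αo)
    (hxtH : Hv u (xs + d - y) = (αo : WithTop Ordinal)) :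
    ∀ m ∈ A ⊔ B, ∀ s t : F,
      Hv u (m + s • y + t • (xs + d - y)) =
        min (Hv u m) (min (Hv u (s • y)) (Hv u (t • (xs + d - y)))) := by
  intro m hm s t
  set xt := xs + d - y with hxt
  set M' : Submodule F V := (A ⊔ B) ⊔ Submodule.span F {xs} with hM'
  have hmM' : m ∈ M' := le_sup_left (α := Submodule F V) hm
  have hdM : d ∈ A ⊔ B := hd.1
  have hmtd : m + t • d ∈ A ⊔ B := (A ⊔ B).add_mem hm ((A ⊔ B).smul_mem t hdM)
  have hζ'M' : (m + t • d) + t • xs ∈ M' := by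
    refine M'.add_mem (le_sup_left (α := Submodule F V) hmtd) ?_
    exact M'.smul_mem t (le_sup_right (α := Submodule F V)
      (Submodule.mem_span_singleton_self xs))
  by_cases ht : t = 0
  · -- t = 0
    subst ht
    simp only [zero_smul, add_zero, Hv_zero, inf_top_eq]
    by_cases hs : s = 0
    · simp [hs]
    · rw [(hviy.smul hs).formula m hmM', Hv_smul hs, min_comm]
  · -- t ≠ 0
    have hrw : m + s • y + t • xt = ((m + t • d) + t • xs) + (s - t) • y := by
      rw [hxt, smul_sub, smul_add, sub_smul]
      abel
    have htd : (αo : WithTop Ordinal) ≤ Hv u (t • d) := by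
      rw [Hv_smul ht]; exact mem_gf_iff_le.mp hd.2
    have hζ'val : Hv u ((m + t • d) + t • xs) =
        min (αo : WithTop Ordinal) (Hv u (m + t • d)) := by
      rw [(c.vxs.smul ht).formula (m + t • d) hmtd, Hv_smul ht, c.hH]
    have hLmid : min (αo : WithTop Ordinal) (Hv u (m + t • d)) =
        min (Hv u m) (αo : WithTop Ordinal) := key1 htd
    -- RHS computation
    have hsyge : (αo : WithTop Ordinal) ≤ Hv u (s • y) := by
      by_cases hs : s = 0
      · simp [hs]
      · rw [Hv_smul hs]; exact hθ
    have hRHS : min (Hv u m) (min (Hv u (s • y)) (Hv u (t • xt))) =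
        min (Hv u m) (αo : WithTop Ordinal) := by
      rw [Hv_smul ht, hxtH, min_eq_right hsyge]
    rw [hRHS, hrw]
    by_cases hst : s = t
    · rw [hst, sub_self, zero_smul, add_zero, hζ'val, hLmid]
    · have hst' : s - t ≠ 0 := sub_ne_zero.mpr hst
      rw [(hviy.smul hst').formula _ hζ'M', Hv_smul hst', hζ'val, hLmid]
      -- goal: min (Hv y) (min (Hv m) αo) = min (Hv m) αo
      rw [min_comm (Hv u y), min_assoc, min_eq_left hθ]

/-- Linear independence from the joint formula. -/
theorem jointLI {A B : Submodule F V} {xs a b : V} {αo : Ordinal.{uV}}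
    (_ : Ctx u A B xs a b αo) {y xt : V}
    (hJ : ∀ m ∈ A ⊔ B, ∀ s t : F,
      Hv u (m + s • y + t • xt) = min (Hv u m) (min (Hv u (s • y)) (Hv u (t • xt))))
    (hxtH : Hv u xt = (αo : WithTop Ordinal))
    (hyM : y ∉ A ⊔ B ∨ y = 0) :
    ∀ m ∈ A ⊔ B, ∀ s t : F, m + s • y + t • xt = 0 → s • y = 0 ∧ t • xt = 0 := by
  intro m hm s t h0
  have htop := hJ m hm s t
  rw [h0, Hv_zero] at htop
  have hmin : min (Hv u m) (min (Hv u (s • y)) (Hv u (t • xt))) = ⊤ := htop.symm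
  have h5 : min (Hv u (s • y)) (Hv u (t • xt)) = ⊤ :=
    top_le_iff.mp (hmin ▸ min_le_right (Hv u m) _)
  have h6 : Hv u (t • xt) = ⊤ :=
    top_le_iff.mp (h5 ▸ min_le_right (Hv u (s • y)) _)
  have ht : t • xt = 0 := by
    by_contra hcon
    have ht0 : t ≠ 0 := fun hh => hcon (by rw [hh, zero_smul])
    rw [Hv_smul ht0, hxtH] at h6
    exact coe_ne_top' αo h6
  refine ⟨?_, ht⟩
  rcases hyM with hyM | rfl
  · by_contra hcon
    have hs0 : s ≠ 0 := fun hh => hcon (by rw [hh, zero_smul])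
    rw [ht, add_zero] at h0
    have h7 : s • y = -m := eq_neg_of_add_eq_zero_right h0
    have h8 : y = s⁻¹ • (-m) := by rw [← h7, inv_smul_smul₀ hs0]
    exact hyM (h8 ▸ (A ⊔ B).smul_mem s⁻¹ ((A ⊔ B).neg_mem hm))
  · rw [smul_zero]

end Ctx

/-! ### Concluding an extension step -/

/-- The target statement of each case. -/
def Concl (u : Module.End F V) (A B : Submodule F V) (xs : V) : Prop :=
  ∃ A' B' : Submodule F V, VP u A' B' ∧ A ≤ A' ∧ B ≤ B' ∧ xs ∈ A' ⊔ B'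

theorem conclude {A B : Submodule F V} {xs : V}
    (hvp : VP u A B) {y xt : V}
    (hy : u y ∈ B) (hxtu : u xt ∈ A)
    (hJ : ∀ m ∈ A ⊔ B, ∀ s t : F,
      Hv u (m + s • y + t • xt) = min (Hv u m) (min (Hv u (s • y)) (Hv u (t • xt))))
    (hLI : ∀ m ∈ A ⊔ B, ∀ s t : F, m + s • y + t • xt = 0 → s • y = 0 ∧ t • xt = 0)
    (hcov : xs ∈ (A ⊔ Submodule.span F {y}) ⊔ (B ⊔ Submodule.span F {xt})) :
    Concl u A B xs :=
  ⟨_, _, hvp.add hy hxtu hJ hLI, le_sup_left, le_sup_left, hcov⟩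

theorem gf2_le_Z {A B : Submodule F V} {αo : Ordinal.{uV}} :
    gf u (αo + 1 + 1) ≤ Zsub u A B αo := le_sup_left

theorem mapM_le_Z {A B : Submodule F V} {αo : Ordinal.{uV}} :
    Submodule.map u ((A ⊔ B) ⊓ gf u αo) ≤ Zsub u A B αo := le_sup_right

/-- The key image computation: a jump in height forces reachability. -/
theorem imageZ {A B : Submodule F V} {xs a b : V} {αo : Ordinal.{uV}}
    (c : Ctx u A B xs a b αo) {b' y a₂ : V}
    (hb' : b' ∈ B) (ha₂ : a₂ ∈ A ⊓ gf u αo) (hyu : u y = b' + u a₂)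
    {m : V} (hm : m ∈ A ⊔ B) (hmh : (αo : WithTop Ordinal) ≤ Hv u m) (t : F)
    (him : u (y + (m + t • xs)) ∈ gf u (αo + 1 + 1)) :
    (∃ p ∈ Submodule.map u ((A ⊔ B) ⊓ gf u αo), t • a + p ∈ gf u (αo + 1 + 1)) ∧
    (∃ q ∈ Submodule.map u ((A ⊔ B) ⊓ gf u αo), b' + t • b + q ∈ gf u (αo + 1 + 1)) := by
  obtain ⟨mA, hmA, mB, hmB, rfl, hA, hB⟩ := c.decompM hm
  have hrw : u (y + ((mA + mB) + t • xs)) =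
      (t • a + u mB) + (b' + t • b + u (a₂ + mA)) := by
    simp only [map_add, map_smul, hyu, c.dec, smul_add]
    abel
  rw [hrw] at him
  have hA' : t • a + u mB ∈ A := by
    refine A.add_mem (A.smul_mem t c.haA) ?_
    exact c.vp.mapB ⟨mB, hmB, rfl⟩
  have hB' : b' + t • b + u (a₂ + mA) ∈ B := by
    refine B.add_mem (B.add_mem hb' (B.smul_mem t c.hbB)) ?_
    exact c.vp.mapA ⟨a₂ + mA, A.add_mem ha₂.1 hmA, rfl⟩
  have hHA : (t • a + u mB) ∈ gf u (αo + 1 + 1) := by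
    rw [mem_gf_iff_le]
    calc ((αo + 1 + 1 : Ordinal) : WithTop Ordinal)
        ≤ Hv u ((t • a + u mB) + (b' + t • b + u (a₂ + mA))) := mem_gf_iff_le.mp him
      _ ≤ Hv u (t • a + u mB) := c.vp.compA hA' hB'
  have hHB : (b' + t • b + u (a₂ + mA)) ∈ gf u (αo + 1 + 1) := by
    rw [mem_gf_iff_le]
    calc ((αo + 1 + 1 : Ordinal) : WithTop Ordinal)
        ≤ Hv u ((t • a + u mB) + (b' + t • b + u (a₂ + mA))) := mem_gf_iff_le.mp him
      _ ≤ Hv u (b' + t • b + u (a₂ + mA)) := c.vp.compB hA' hB'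
  constructor
  · refine ⟨u mB, Submodule.mem_map.mpr ⟨mB, ⟨le_sup_right (α := Submodule F V) hmB, ?_⟩, rfl⟩, hHA⟩
    exact mem_gf_iff_le.mpr (le_trans hmh hB)
  · refine ⟨u (a₂ + mA), Submodule.mem_map.mpr ⟨a₂ + mA,
      ⟨le_sup_left (α := Submodule F V) (A.add_mem ha₂.1 hmA), ?_⟩, rfl⟩, hHB⟩
    exact (gf u αo).add_mem ha₂.2 (mem_gf_iff_le.mpr (le_trans hmh hA))

theorem a_mem_Z {A B : Submodule F V} {αo : Ordinal.{uV}} {a : V} {t : F} (ht : t ≠ 0)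
    {p : V} (hp : p ∈ Submodule.map u ((A ⊔ B) ⊓ gf u αo))
    (hta : t • a + p ∈ gf u (αo + 1 + 1)) : a ∈ Zsub u A B αo := by
  have h1 : t • a + p ∈ Zsub u A B αo := gf2_le_Z hta
  have h2 : p ∈ Zsub u A B αo := mapM_le_Z hp
  have h3 : t • a ∈ Zsub u A B αo := by
    have := (Zsub u A B αo).sub_mem h1 h2
    rwa [add_sub_cancel_right] at this
  have := (Zsub u A B αo).smul_mem t⁻¹ h3
  rwa [inv_smul_smul₀ ht] at this

theorem b'_mem_Z {A B : Submodule F V} {αo : Ordinal.{uV}} {b' : V}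
    {q : V} (hq : q ∈ Submodule.map u ((A ⊔ B) ⊓ gf u αo))
    (htb : b' + q ∈ gf u (αo + 1 + 1)) : b' ∈ Zsub u A B αo := by
  have h1 : b' + q ∈ Zsub u A B αo := gf2_le_Z htb
  have h2 : q ∈ Zsub u A B αo := mapM_le_Z hq
  have := (Zsub u A B αo).sub_mem h1 h2
  rwa [add_sub_cancel_right] at this

/-! ### Case E1 -/

theorem caseE1 {A B : Submodule F V} {xs a b : V} {αo : Ordinal.{uV}}
    (c : Ctx u A B xs a b αo) {a₁ : V} (ha₁ : a₁ ∈ A)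
    (ha₁h : (αo : WithTop Ordinal) ≤ Hv u a₁) (ha₁u : u a₁ = b) :
    Concl u A B xs := by
  have hd : -a₁ ∈ (A ⊔ B) ⊓ gf u αo :=
    ⟨(A ⊔ B).neg_mem (le_sup_left (α := Submodule F V) ha₁),
     (gf u αo).neg_mem (mem_gf_iff_le.mpr ha₁h)⟩
  have hxtH : Hv u (xs + -a₁ - 0) = (αo : WithTop Ordinal) := by
    rw [sub_zero, c.vxs (-a₁) hd.1, c.hH, Hv_neg]
    exact min_eq_left ha₁h
  have hviy : VIndep u ((A ⊔ B) ⊔ Submodule.span F {xs}) (0 : V) :=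
    vindep_top Hv_zero
  have hJ := c.joint hviy (by rw [Hv_zero]; exact le_top) hd hxtH
  have hxt0 : xs + -a₁ - (0 : V) = xs - a₁ := by
    rw [sub_zero, ← sub_eq_add_neg]
  rw [hxt0] at hJ hxtH
  have hLI := c.jointLI hJ hxtH (Or.inr rfl)
  refine conclude c.vp (y := 0) (xt := xs - a₁) ?_ ?_ hJ hLI ?_
  · rw [map_zero]; exact B.zero_mem
  · rw [map_sub, c.dec, ha₁u, add_sub_cancel_right]; exact c.haA
  · have hmem : (xs - a₁) + a₁ ∈ (A ⊔ Submodule.span F {(0:V)}) ⊔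
        (B ⊔ Submodule.span F {xs - a₁}) := by
      refine Submodule.add_mem _ ?_ ?_
      · exact le_sup_right (α := Submodule F V)
          (le_sup_right (α := Submodule F V) (Submodule.mem_span_singleton_self _))
      · exact le_sup_left (α := Submodule F V) (le_sup_left (α := Submodule F V) ha₁)
    simpa using hmem

/-! ### Case L -/

theorem caseL {A B : Submodule F V} {xs a b : V} {αo : Ordinal.{uV}}
    (c : Ctx u A B xs a b αo)
    (haZ : a ∉ Zsub u A B αo) (hbZ : b ∉ Zsub u A B αo) :
    Concl u A B xs := by
  haveI := c.M_fin
  -- the preimage c0 of b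
  obtain ⟨c0, hc0g, hc0u⟩ : ∃ c0 ∈ gf u αo, u c0 = b := by
    apply gf_mem_succ
    exact mem_gf_iff_le.mpr c.hHb
  have ha₂0 : (0 : V) ∈ A ⊓ gf u αo := ⟨A.zero_mem, (gf u αo).zero_mem⟩
  have hyu0 : u c0 = b + u 0 := by rw [map_zero, add_zero]; exact hc0u
  -- height of c0 is exactly αo
  have hHc : Hv u c0 = (αo : WithTop Ordinal) := by
    refine le_antisymm ?_ (mem_gf_iff_le.mp hc0g)
    by_contra hcon
    push_neg at hcon
    have h1 : ((αo + 1 : Ordinal) : WithTop Ordinal) ≤ Hv u c0 := by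
      have := sux_le_of_lt hcon
      rwa [sux_coe] at this
    have h2 : ((αo + 1 + 1 : Ordinal) : WithTop Ordinal) ≤ Hv u b := by
      rw [← hc0u]
      have := sux_Hv_le_u (u := u) (x := c0)
      refine le_trans ?_ this
      refine le_trans ?_ (sux_mono h1)
      rw [sux_coe]
    exact hbZ (gf2_le_Z (mem_gf_iff_le.mpr h2))
  -- properness of c0 over M ⊔ span xs
  have hprop : ∀ ζ ∈ (A ⊔ B) ⊔ Submodule.span F {xs}, Hv u (c0 + ζ) ≤ Hv u c0 := by
    rw [hHc]
    intro ζ hζ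
    by_contra hcon
    push_neg at hcon
    obtain ⟨m, hm, t, rfl⟩ := mem_sup_span_singleton.mp hζ
    have hζge : (αo : WithTop Ordinal) ≤ Hv u (m + t • xs) := by
      by_contra h3
      push_neg at h3
      have h4 : Hv u (c0 + (m + t • xs)) = Hv u (m + t • xs) := by
        rw [add_comm]
        exact Hv_add_exact (by rw [hHc]; exact h3)
      rw [h4] at hcon
      exact absurd (lt_trans hcon h3) (lt_irrefl _)
    have htxs : (αo : WithTop Ordinal) ≤ Hv u (t • xs) := by
      by_cases ht : t = 0
      · simp [ht]
      · rw [Hv_smul ht, c.hH]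
    have hmh : (αo : WithTop Ordinal) ≤ Hv u m := by
      have h5 : m = (m + t • xs) - t • xs := by abel
      rw [h5]
      exact le_trans (le_min hζge htxs) min_le_Hv_sub
    have hjump : ((αo + 1 + 1 : Ordinal) : WithTop Ordinal) ≤ Hv u (u (c0 + (m + t • xs))) := by
      have h6 : ((αo + 1 : Ordinal) : WithTop Ordinal) ≤ Hv u (c0 + (m + t • xs)) := by
        have := sux_le_of_lt hcon
        rwa [sux_coe] at this
      refine le_trans ?_ (sux_Hv_le_u (u := u))
      refine le_trans ?_ (sux_mono h6)
      rw [sux_coe]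
    have him : u (c0 + (m + t • xs)) ∈ gf u (αo + 1 + 1) := mem_gf_iff_le.mpr hjump
    obtain ⟨hA, hB⟩ := imageZ c c.hbB ha₂0 hyu0 hm hmh t him
    by_cases ht : t = 0
    · obtain ⟨q, hq, hbq⟩ := hB
      rw [ht, zero_smul, add_zero] at hbq
      exact hbZ (b'_mem_Z hq hbq)
    · obtain ⟨p, hp, hap⟩ := hA
      exact haZ (a_mem_Z ht hp hap)
  have hviy : VIndep u ((A ⊔ B) ⊔ Submodule.span F {xs}) c0 := vindep_of_proper hprop
  -- height of xt
  have hxtH : Hv u (xs + 0 - c0) = (αo : WithTop Ordinal) := by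
    rw [add_zero]
    refine le_antisymm ?_ ?_
    · by_contra hcon
      push_neg at hcon
      have h1 : ((αo + 1 + 1 : Ordinal) : WithTop Ordinal) ≤ Hv u (u (xs - c0)) := by
        have h6 := sux_le_of_lt hcon
        rw [sux_coe] at h6
        refine le_trans ?_ (sux_Hv_le_u (u := u))
        refine le_trans ?_ (sux_mono h6)
        rw [sux_coe]
      have h2 : u (xs - c0) = a := by
        rw [map_sub, c.dec, hc0u, add_sub_cancel_right]
      rw [h2] at h1
      exact haZ (gf2_le_Z (mem_gf_iff_le.mpr h1))
    · refine le_trans ?_ min_le_Hv_sub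
      rw [c.hH, hHc, min_self]
  have hJ := c.joint hviy (by rw [hHc]) ⟨(A ⊔ B).zero_mem, (gf u αo).zero_mem⟩ hxtH
  -- c0 is not in M
  have hc0M : c0 ∉ A ⊔ B := by
    intro hc0M
    obtain ⟨cA, hcA, cB, hcB, rfl, hHA, hHB⟩ := c.decompM hc0M
    have h1 : u cB ∈ A ⊓ B := by
      constructor
      · exact c.vp.mapB ⟨cB, hcB, rfl⟩
      · have : u cB = b - u cA := by
          rw [← hc0u, map_add]; abel
        rw [this]
        exact B.sub_mem c.hbB (c.vp.mapA ⟨cA, hcA, rfl⟩)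
    rw [c.vp.disj, Submodule.mem_bot] at h1
    have h2 : b = u cA := by
      have := hc0u
      rw [map_add, h1, add_zero] at this
      exact this.symm
    refine hbZ (mapM_le_Z ?_)
    refine Submodule.mem_map.mpr ⟨cA, ⟨le_sup_left (α := Submodule F V) hcA, ?_⟩, h2.symm⟩
    exact mem_gf_iff_le.mpr (le_trans (by rw [hHc]) hHA)
  have hLI := c.jointLI hJ hxtH (Or.inl hc0M)
  refine conclude c.vp (y := c0) (xt := xs + 0 - c0) ?_ ?_ hJ hLI ?_
  · rw [hc0u]; exact c.hbB
  · have h2 : u (xs + 0 - c0) = a := by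
      rw [map_sub, map_add, map_zero, add_zero, c.dec, hc0u, add_sub_cancel_right]
    rw [h2]; exact c.haA
  · have hmem : (xs + 0 - c0) + c0 ∈ (A ⊔ Submodule.span F {c0}) ⊔
        (B ⊔ Submodule.span F {xs + 0 - c0}) := by
      refine Submodule.add_mem _ ?_ ?_
      · exact le_sup_right (α := Submodule F V)
          (le_sup_right (α := Submodule F V) (Submodule.mem_span_singleton_self _))
      · exact le_sup_left (α := Submodule F V)
          (le_sup_right (α := Submodule F V) (Submodule.mem_span_singleton_self _))
    simpa using hmem

/-! ### The repair machinery -/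

/-- Extraction of a failure of valuated independence. -/
theorem failure_data {W : Submodule F V} {y : V} (hnvi : ¬ VIndep u W y) :
    ∃ θo : Ordinal.{uV}, Hv u y = (θo : WithTop Ordinal) ∧
      ∃ ζ ∈ W, Hv u ζ = (θo : WithTop Ordinal) ∧
        ((θo + 1 : Ordinal) : WithTop Ordinal) ≤ Hv u (y + ζ) := by
  rw [VIndep] at hnvi
  push_neg at hnvi
  obtain ⟨ζ, hζW, hne⟩ := hnvi
  have hge : min (Hv u y) (Hv u ζ) ≤ Hv u (y + ζ) := min_le_Hv_add
  have heq : Hv u ζ = Hv u y := by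
    rcases lt_trichotomy (Hv u ζ) (Hv u y) with h | h | h
    · exfalso
      refine hne ?_
      rw [add_comm, Hv_add_exact h, min_eq_right h.le]
    · exact h
    · exfalso
      refine hne ?_
      rw [Hv_add_exact h, min_eq_left h.le]
  cases hy : Hv u y with
  | top =>
    exfalso
    have hyD : y ∈ Dd u := Hv_eq_top_iff.mp hy
    have hζD : ζ ∈ Dd u := Hv_eq_top_iff.mp (heq.trans hy)
    refine hne ?_
    rw [Hv_eq_top_iff.mpr ((Dd u).add_mem hyD hζD), hy, heq, hy, min_self]
  | coe θo =>
    refine ⟨θo, rfl, ζ, hζW, heq.trans hy, ?_⟩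
    have hlt : (θo : WithTop Ordinal) < Hv u (y + ζ) := by
      rcases lt_or_eq_of_le hge with h | h
      · rw [hy, heq, hy, min_self] at h
        exact h
      · exfalso
        exact hne (by rw [← h, hy, heq, hy, min_self])
    have := sux_le_of_lt hlt
    rwa [sux_coe] at this

/-- The image computation for the repair step (pure `M` version, at level `θo`). -/
theorem imageZ' {A B : Submodule F V} {xs a b : V} {αo : Ordinal.{uV}}
    (c : Ctx u A B xs a b αo) {b' y a₂ : V}
    (hb' : b' ∈ B) (ha₂A : a₂ ∈ A) (hyu : u y = b' + u a₂)
    {m : V} (hm : m ∈ A ⊔ B) {γ : Ordinal.{uV}}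
    (him : u (y + m) ∈ gf u γ) :
    ∃ mA ∈ A, ∃ mB ∈ B, m = mA + mB ∧ Hv u m ≤ Hv u mA ∧ Hv u m ≤ Hv u mB ∧
      u mB ∈ gf u γ ∧ b' + u (a₂ + mA) ∈ gf u γ := by
  obtain ⟨mA, hmA, mB, hmB, rfl, hA, hB⟩ := c.decompM hm
  have hrw : u (y + (mA + mB)) = (u mB) + (b' + u (a₂ + mA)) := by
    simp only [map_add, hyu]
    abel
  rw [hrw] at him
  have hA' : u mB ∈ A := c.vp.mapB ⟨mB, hmB, rfl⟩
  have hB' : b' + u (a₂ + mA) ∈ B :=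
    B.add_mem hb' (c.vp.mapA ⟨a₂ + mA, A.add_mem ha₂A hmA, rfl⟩)
  refine ⟨mA, hmA, mB, hmB, rfl, hA, hB, ?_, ?_⟩
  · rw [mem_gf_iff_le]
    exact le_trans (mem_gf_iff_le.mp him) (c.vp.compA hA' hB')
  · rw [mem_gf_iff_le]
    exact le_trans (mem_gf_iff_le.mp him) (c.vp.compB hA' hB')

/-- The invariant carried through the repair iteration. -/
def RInv (u : Module.End F V) (A B : Submodule F V) (αo : Ordinal.{uV}) (b' y : V) : Prop :=
  (∃ a₂ ∈ A ⊓ gf u αo, u y = b' + u a₂) ∧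
  (∃ yh ∈ gf u (αo + 1), ∃ ylo ∈ (A ⊔ B) ⊓ gf u αo, y = yh + ylo)

theorem RInv.hge {A B : Submodule F V} {αo : Ordinal.{uV}} {b' y : V}
    (h : RInv u A B αo b' y) : (αo : WithTop Ordinal) ≤ Hv u y := by
  obtain ⟨-, yh, hyh, ylo, hylo, rfl⟩ := h
  refine le_trans (le_min ?_ ?_) min_le_Hv_add
  · refine le_trans ?_ (mem_gf_iff_le.mp (gf_anti (le_of_lt (lt_add_one αo)) hyh))
    exact le_refl _
  · exact mem_gf_iff_le.mp hylo.2

/-- The repair loop. -/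
theorem repair_loop {A B : Submodule F V} {xs a b : V} {αo : Ordinal.{uV}}
    (c : Ctx u A B xs a b αo) {b' : V} (hb' : b' ∈ B)
    (P : V → Prop)
    (hPmono : ∀ y y', P y → Hv u y ≤ Hv u y' → P y')
    (hkill : ∀ (y : V) (θo : Ordinal.{uV}), RInv u A B αo b' y → P y → Hv u y = (θo : WithTop Ordinal) →
      ∀ m ∈ A ⊔ B, ∀ t : F, t ≠ 0 → Hv u (m + t • xs) = (θo : WithTop Ordinal) →
      ((θo + 1 : Ordinal) : WithTop Ordinal) ≤ Hv u (y + (m + t • xs)) → False) :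
    ∀ n : ℕ, ∀ y, RInv u A B αo b' y → P y →
      ({η : Ordinal.{uV} | Hv u y ≤ (η : WithTop Ordinal) ∧
        ∃ ζ ∈ (A ⊔ B) ⊔ Submodule.span F {xs}, Hv u ζ = (η : WithTop Ordinal)}).ncard ≤ n →
      ∃ y', RInv u A B αo b' y' ∧ P y' ∧
        VIndep u ((A ⊔ B) ⊔ Submodule.span F {xs}) y' := by
  haveI := c.M_fin
  haveI : FiniteDimensional F ((A ⊔ B) ⊔ Submodule.span F {xs} : Submodule F V) :=
    Submodule.finiteDimensional_sup _ _
  have hfin : ∀ y : V, ({η : Ordinal.{uV} | Hv u y ≤ (η : WithTop Ordinal) ∧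
      ∃ ζ ∈ (A ⊔ B) ⊔ Submodule.span F {xs}, Hv u ζ = (η : WithTop Ordinal)}).Finite := by
    intro y
    refine Set.Finite.subset (spec_finite (u := u) ((A ⊔ B) ⊔ Submodule.span F {xs})) ?_
    rintro η ⟨-, hζ⟩
    exact hζ
  intro n
  induction n with
  | zero =>
    intro y hInv hP hcard
    by_cases hvi : VIndep u ((A ⊔ B) ⊔ Submodule.span F {xs}) y
    · exact ⟨y, hInv, hP, hvi⟩
    exfalso
    obtain ⟨θo, hθy, ζ, hζW, hζh, -⟩ := failure_data hvi
    have hmem : θo ∈ {η : Ordinal.{uV} | Hv u y ≤ (η : WithTop Ordinal) ∧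
        ∃ ζ ∈ (A ⊔ B) ⊔ Submodule.span F {xs}, Hv u ζ = (η : WithTop Ordinal)} :=
      ⟨le_of_eq hθy, ζ, hζW, hζh⟩
    have := (Set.ncard_pos (hfin y)).mpr ⟨θo, hmem⟩
    omega
  | succ n IH =>
    intro y hInv hP hcard
    by_cases hvi : VIndep u ((A ⊔ B) ⊔ Submodule.span F {xs}) y
    · exact ⟨y, hInv, hP, hvi⟩
    obtain ⟨θo, hθy, ζ, hζW, hζh, hjump⟩ := failure_data hvi
    obtain ⟨m, hm, t, rfl⟩ := mem_sup_span_singleton.mp hζW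
    have hθα : (αo : WithTop Ordinal) ≤ (θo : WithTop Ordinal) := hθy ▸ hInv.hge
    by_cases ht : t = 0
    · -- genuine repair step
      rw [ht, zero_smul, add_zero] at hζh hjump
      have hmM : m ∈ A ⊔ B := hm
      -- image of the jump
      have him : u (y + m) ∈ gf u (θo + 1 + 1) := by
        rw [mem_gf_iff_le]
        refine le_trans ?_ (sux_Hv_le_u (u := u))
        refine le_trans ?_ (sux_mono hjump)
        rw [sux_coe]
      obtain ⟨a₂, ha₂, hyu⟩ := hInv.1
      obtain ⟨mA, hmA, mB, hmB, hmeq, hHmA, hHmB, humB, -⟩ :=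
        imageZ' c hb' ha₂.1 hyu hmM him
      obtain ⟨z, hz, hzu⟩ := gf_mem_succ humB
      set y' := y + m - z with hy'
      have hInv' : RInv u A B αo b' y' := by
        constructor
        · refine ⟨a₂ + mA, ⟨A.add_mem ha₂.1 hmA, ?_⟩, ?_⟩
          · refine (gf u αo).add_mem ha₂.2 ?_
            exact mem_gf_iff_le.mpr (le_trans (hθα.trans hζh.ge) hHmA)
          · rw [hy', map_sub, map_add, hyu, hmeq, map_add, hzu, map_add]
            abel
        · obtain ⟨yh, hyh, ylo, hylo, hyeq⟩ := hInv.2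
          refine ⟨yh - z, ?_, ylo + m, ?_, ?_⟩
          · refine (gf u (αo + 1)).sub_mem hyh ?_
            refine gf_anti ?_ hz
            have : αo ≤ θo := by exact_mod_cast hθα
            exact add_le_add_left this 1
          · refine ⟨(A ⊔ B).add_mem hylo.1 hmM, (gf u αo).add_mem hylo.2 ?_⟩
            exact mem_gf_iff_le.mpr (hθα.trans hζh.ge)
          · rw [hy', hyeq]; abel
      have hy'h : ((θo + 1 : Ordinal) : WithTop Ordinal) ≤ Hv u y' := by
        rw [hy']
        refine le_trans (le_min hjump ?_) min_le_Hv_sub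
        exact mem_gf_iff_le.mp hz
      have hP' : P y' := hPmono y y' hP (le_trans (le_of_eq hθy)
        (le_trans (by exact_mod_cast le_of_lt (lt_add_one θo)) hy'h))
      refine IH y' hInv' hP' ?_
      -- cardinality decrease
      have hsub : {η : Ordinal.{uV} | Hv u y' ≤ (η : WithTop Ordinal) ∧
          ∃ ζ ∈ (A ⊔ B) ⊔ Submodule.span F {xs}, Hv u ζ = (η : WithTop Ordinal)} ⊆
          {η : Ordinal.{uV} | Hv u y ≤ (η : WithTop Ordinal) ∧
          ∃ ζ ∈ (A ⊔ B) ⊔ Submodule.span F {xs}, Hv u ζ = (η : WithTop Ordinal)} \ {θo} := by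
        rintro η ⟨hη1, hη2⟩
        have hθη : ((θo + 1 : Ordinal) : WithTop Ordinal) ≤ (η : WithTop Ordinal) :=
          le_trans hy'h hη1
        have hθη' : θo + 1 ≤ η := by exact_mod_cast hθη
        constructor
        · refine ⟨?_, hη2⟩
          rw [hθy, WithTop.coe_le_coe]
          exact le_trans (le_of_lt (lt_add_one θo)) hθη'
        · intro hcon
          rw [Set.mem_singleton_iff] at hcon
          subst hcon
          exact absurd (Order.add_one_le_iff.mp hθη') (lt_irrefl _)
      have hθomem : θo ∈ {η : Ordinal.{uV} | Hv u y ≤ (η : WithTop Ordinal) ∧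
          ∃ ζ ∈ (A ⊔ B) ⊔ Submodule.span F {xs}, Hv u ζ = (η : WithTop Ordinal)} := by
        refine ⟨le_of_eq hθy, m, le_sup_left (α := Submodule F V) hmM, ?_⟩
        rw [← hζh]
      have h1 := Set.ncard_le_ncard hsub (hfin y).diff
      have h2 := Set.ncard_diff_singleton_lt_of_mem hθomem (hfin y)
      omega
    · -- killed branch
      exact absurd (hkill y θo hInv hP hθy m hm t ht hζh hjump) id

/-! ### Finishing the hard case -/

theorem finishH {A B : Submodule F V} {xs a b : V} {αo : Ordinal.{uV}}
    (c : Ctx u A B xs a b αo)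
    (hE1 : ¬ ∃ a₁, a₁ ∈ A ∧ (αo : WithTop Ordinal) ≤ Hv u a₁ ∧ u a₁ = b)
    {y : V} (hInv : RInv u A B αo b y)
    (hvi : VIndep u ((A ⊔ B) ⊔ Submodule.span F {xs}) y) :
    Concl u A B xs := by
  obtain ⟨⟨a₂, ha₂, hyu⟩, yh, hyh, ylo, hylo, hyeq⟩ := hInv
  obtain ⟨yloA, hyloA, yloB, hyloB, hyloeq, hHyloA, hHyloB⟩ := c.decompM hylo.1
  have hyloh : (αo : WithTop Ordinal) ≤ Hv u ylo := mem_gf_iff_le.mp hylo.2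
  set d := a₂ + yloB with hd_def
  have hdM : d ∈ (A ⊔ B) ⊓ gf u αo := by
    constructor
    · exact (A ⊔ B).add_mem (le_sup_left (α := Submodule F V) ha₂.1)
        (le_sup_right (α := Submodule F V) hyloB)
    · exact (gf u αo).add_mem ha₂.2 (mem_gf_iff_le.mpr (le_trans hyloh hHyloB))
  have hθ : (αo : WithTop Ordinal) ≤ Hv u y := RInv.hge ⟨⟨a₂, ha₂, hyu⟩, yh, hyh, ylo, hylo, hyeq⟩
  -- height of xt
  have hxtH : Hv u (xs + d - y) = (αo : WithTop Ordinal) := by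
    have hrw : xs + d - y = (xs + (a₂ - yloA)) - yh := by
      rw [hd_def, hyeq, hyloeq]; abel
    rw [hrw]
    have he : a₂ - yloA ∈ A ⊔ B :=
      (A ⊔ B).sub_mem (le_sup_left (α := Submodule F V) ha₂.1)
        (le_sup_left (α := Submodule F V) hyloA)
    have h1 : Hv u (xs + (a₂ - yloA)) = (αo : WithTop Ordinal) := by
      rw [c.vxs _ he, c.hH]
      refine min_eq_left ?_
      refine le_trans (le_min (mem_gf_iff_le.mp ha₂.2) (le_trans hyloh hHyloA)) ?_
      exact min_le_Hv_sub
    rw [Hv_sub_exact (by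
      rw [h1]
      refine lt_of_lt_of_le ?_ (mem_gf_iff_le.mp hyh)
      exact_mod_cast lt_add_one αo), h1]
  have hJ := c.joint hvi hθ hdM hxtH
  -- y is not in M
  have hyM : y ∉ A ⊔ B := by
    intro hyMem
    obtain ⟨yA, hyA, yB, hyB, hyeq2, hHyA, hHyB⟩ := c.decompM hyMem
    have h1 : u yB ∈ A ⊓ B := by
      constructor
      · exact c.vp.mapB ⟨yB, hyB, rfl⟩
      · have h2 : u yB = b + u a₂ - u yA := by
          rw [← hyu, hyeq2, map_add]; abel
        rw [h2]
        refine B.sub_mem (B.add_mem c.hbB ?_) ?_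
        · exact c.vp.mapA ⟨a₂, ha₂.1, rfl⟩
        · exact c.vp.mapA ⟨yA, hyA, rfl⟩
    rw [c.vp.disj, Submodule.mem_bot] at h1
    refine hE1 ⟨yA - a₂, A.sub_mem hyA ha₂.1, ?_, ?_⟩
    · refine le_trans (le_min ?_ (mem_gf_iff_le.mp ha₂.2)) min_le_Hv_sub
      exact le_trans (hyeq2 ▸ hθ) hHyA
    · have h3 := hyu
      rw [hyeq2, map_add, h1, add_zero] at h3
      rw [map_sub, h3]
      abel
  have hLI := c.jointLI hJ hxtH (Or.inl hyM)
  refine conclude c.vp (y := y) (xt := xs + d - y) ?_ ?_ hJ hLI ?_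
  · rw [hyu]
    exact B.add_mem c.hbB (c.vp.mapA ⟨a₂, ha₂.1, rfl⟩)
  · have h2 : u (xs + d - y) = a + u yloB := by
      rw [map_sub, map_add, c.dec, hyu, hd_def, map_add]
      abel
    rw [h2]
    exact A.add_mem c.haA (c.vp.mapB ⟨yloB, hyloB, rfl⟩)
  · have hmem : ((xs + d - y) + y) - d ∈ (A ⊔ Submodule.span F {y}) ⊔
        (B ⊔ Submodule.span F {xs + d - y}) := by
      refine Submodule.sub_mem _ (Submodule.add_mem _ ?_ ?_) ?_
      · exact le_sup_right (α := Submodule F V)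
          (le_sup_right (α := Submodule F V) (Submodule.mem_span_singleton_self _))
      · exact le_sup_left (α := Submodule F V)
          (le_sup_right (α := Submodule F V) (Submodule.mem_span_singleton_self _))
      · exact (sup_le_sup (le_sup_left : A ≤ _) (le_sup_left : B ≤ _)) hdM.1
    simpa using hmem

/-! ### The hard cases -/

theorem Concl.shift {A B : Submodule F V} {xs m' : V} (hm' : m' ∈ A ⊔ B)
    (h : Concl u A B (xs - m')) : Concl u A B xs := by
  obtain ⟨A', B', hvp, hA, hB, hmem⟩ := h
  refine ⟨A', B', hvp, hA, hB, ?_⟩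
  have h2 : (xs - m') + m' ∈ A' ⊔ B' :=
    Submodule.add_mem _ hmem ((sup_le_sup hA hB) hm')
  simpa using h2

theorem caseHasym {A B : Submodule F V} {xs a b : V} {αo : Ordinal.{uV}}
    (c : Ctx u A B xs a b αo)
    (hbZ : b ∈ Zsub u A B αo) (haZ : a ∉ Zsub u A B αo) :
    Concl u A B xs := by
  by_cases hE1 : ∃ a₁, a₁ ∈ A ∧ (αo : WithTop Ordinal) ≤ Hv u a₁ ∧ u a₁ = b
  · obtain ⟨a₁, h1, h2, h3⟩ := hE1
    exact caseE1 c h1 h2 h3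
  -- set up the initial y₀
  obtain ⟨vb, hvb, qb, hqb, hbeq⟩ := Submodule.mem_sup.mp hbZ
  obtain ⟨mb, hmb, hmbu⟩ := Submodule.mem_map.mp hqb
  obtain ⟨mbA, hmbA, mbB, hmbB, hmbeq, hHmbA, hHmbB⟩ := c.decompM hmb.1
  have hmbh : (αo : WithTop Ordinal) ≤ Hv u mb := mem_gf_iff_le.mp hmb.2
  obtain ⟨c0, hc0, hc0u⟩ := gf_mem_succ hvb
  have hInv0 : RInv u A B αo b (c0 + mbB) := by
    constructor
    · refine ⟨-mbA, ⟨A.neg_mem hmbA, (gf u αo).neg_mem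
        (mem_gf_iff_le.mpr (le_trans hmbh hHmbA))⟩, ?_⟩
      rw [map_add, map_neg, hc0u]
      have hb2 : b = vb + (u mbA + u mbB) := by
        rw [← map_add, ← hmbeq, hmbu, ← hbeq]
      rw [hb2]; abel
    · exact ⟨c0, hc0, mbB, ⟨le_sup_right (α := Submodule F V) hmbB,
        mem_gf_iff_le.mpr (le_trans hmbh hHmbB)⟩, rfl⟩
  -- the kill argument
  have hkill : ∀ (y : V) (θo : Ordinal.{uV}), RInv u A B αo b y → True →
      Hv u y = (θo : WithTop Ordinal) →
      ∀ m ∈ A ⊔ B, ∀ t : F, t ≠ 0 → Hv u (m + t • xs) = (θo : WithTop Ordinal) →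
      ((θo + 1 : Ordinal) : WithTop Ordinal) ≤ Hv u (y + (m + t • xs)) → False := by
    intro y θo hInv _ hθy m hm t ht hζh hjump
    have h1 : Hv u (m + t • xs) = min (αo : WithTop Ordinal) (Hv u m) := by
      have := (c.vxs.smul ht).formula m hm
      rwa [Hv_smul ht, c.hH] at this
    have hθα : (αo : WithTop Ordinal) ≤ (θo : WithTop Ordinal) := hθy ▸ hInv.hge
    have hθle : (θo : WithTop Ordinal) ≤ (αo : WithTop Ordinal) := by
      rw [← hζh, h1]; exact min_le_left _ _
    have hθeq : θo = αo := by exact_mod_cast le_antisymm hθle hθα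
    subst hθeq
    have hmge : (θo : WithTop Ordinal) ≤ Hv u m := by
      by_contra hcon
      push_neg at hcon
      rw [min_eq_right hcon.le] at h1
      rw [h1] at hζh
      exact absurd (hζh ▸ hcon) (lt_irrefl _)
    have him : u (y + (m + t • xs)) ∈ gf u (θo + 1 + 1) := by
      rw [mem_gf_iff_le]
      refine le_trans ?_ (sux_Hv_le_u (u := u))
      refine le_trans ?_ (sux_mono hjump)
      rw [sux_coe]
    obtain ⟨a₂, ha₂, hyu⟩ := hInv.1
    obtain ⟨hA, -⟩ := imageZ c c.hbB ha₂ hyu hm hmge t him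
    obtain ⟨p, hp, hap⟩ := hA
    exact haZ (a_mem_Z ht hp hap)
  obtain ⟨y, hInv, -, hvi⟩ := repair_loop c c.hbB (fun _ => True)
    (fun _ _ _ _ => trivial) hkill _ (c0 + mbB) hInv0 trivial (le_refl _)
  exact finishH c hE1 hInv hvi

theorem caseHboth {A B : Submodule F V} {xs a b : V} {αo : Ordinal.{uV}}
    (c : Ctx u A B xs a b αo)
    (haZ : a ∈ Zsub u A B αo) (hbZ : b ∈ Zsub u A B αo) :
    Concl u A B xs := by
  -- decompose a and b
  obtain ⟨va, hva, qa, hqa, haeq⟩ := Submodule.mem_sup.mp haZ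
  obtain ⟨ma, hma, hmau⟩ := Submodule.mem_map.mp hqa
  obtain ⟨vb, hvb, qb, hqb, hbeq⟩ := Submodule.mem_sup.mp hbZ
  obtain ⟨mb, hmb, hmbu⟩ := Submodule.mem_map.mp hqb
  set m' := ma + mb with hm'def
  have hm'M : m' ∈ (A ⊔ B) ⊓ gf u αo := ((A ⊔ B) ⊓ gf u αo).add_mem hma hmb
  set v := va + vb with hvdef
  have hv2 : v ∈ gf u (αo + 1 + 1) := (gf u (αo + 1 + 1)).add_mem hva hvb
  have husxx : u (xs - m') = v := by
    rw [map_sub, c.dec, hm'def, map_add, hmau, hmbu, ← haeq, ← hbeq, hvdef]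
    abel
  -- new context
  have huM : (A ⊔ B).map u ≤ A ⊔ B := by
    rw [Submodule.map_sup]
    exact sup_le (le_trans c.vp.mapA le_sup_right) (le_trans c.vp.mapB le_sup_left)
  have hvM : v ∈ A ⊔ B := by
    rw [← husxx, map_sub]
    refine Submodule.sub_mem _ ?_ ?_
    · rw [c.dec]
      exact (A ⊔ B).add_mem (le_sup_left (α := Submodule F V) c.haA)
        (le_sup_right (α := Submodule F V) c.hbB)
    · exact huM (Submodule.mem_map_of_mem hm'M.1)
  obtain ⟨a'', ha''A, b'', hb''B, hveq⟩ := Submodule.mem_sup.mp hvM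
  have hm'h : (αo : WithTop Ordinal) ≤ Hv u m' := mem_gf_iff_le.mp hm'M.2
  have hxs''M : xs - m' ∉ A ⊔ B := by
    intro hc
    refine c.hxs ?_
    have := Submodule.add_mem _ hc hm'M.1
    simpa using this
  have hH'' : Hv u (xs - m') = (αo : WithTop Ordinal) := by
    rw [sub_eq_add_neg, c.vxs (-m') ((A ⊔ B).neg_mem hm'M.1), c.hH, Hv_neg]
    exact min_eq_left hm'h
  have hprop'' : ∀ m ∈ A ⊔ B, Hv u ((xs - m') + m) ≤ (αo : WithTop Ordinal) := by
    intro m hm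
    have hrw : (xs - m') + m = xs + (m - m') := by abel
    rw [hrw]
    exact c.prop _ ((A ⊔ B).sub_mem hm hm'M.1)
  have hdec'' : u (xs - m') = a'' + b'' := by rw [husxx, ← hveq]
  have c'' : Ctx u A B (xs - m') a'' b'' αo :=
    ⟨c.vp, hxs''M, hH'', hprop'', ha''A, hb''B, hdec''⟩
  have hvh : ((αo + 1 + 1 : Ordinal) : WithTop Ordinal) ≤ Hv u v := mem_gf_iff_le.mp hv2
  have hb''h : ((αo + 1 + 1 : Ordinal) : WithTop Ordinal) ≤ Hv u b'' := by
    refine le_trans hvh ?_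
    rw [← hveq]
    exact c.vp.compB ha''A hb''B
  by_cases hE1'' : ∃ a₁, a₁ ∈ A ∧ (αo : WithTop Ordinal) ≤ Hv u a₁ ∧ u a₁ = b''
  · obtain ⟨a₁, h1, h2, h3⟩ := hE1''
    exact Concl.shift hm'M.1 (caseE1 c'' h1 h2 h3)
  · have hb''g : b'' ∈ gf u (αo + 1 + 1) := mem_gf_iff_le.mpr hb''h
    obtain ⟨c0, hc0, hc0u⟩ := gf_mem_succ hb''g
    have hInv0 : RInv u A B αo b'' c0 :=
      ⟨⟨0, ⟨A.zero_mem, (gf u αo).zero_mem⟩, by rw [map_zero, add_zero, hc0u]⟩,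
       ⟨c0, hc0, 0, ⟨(A ⊔ B).zero_mem, (gf u αo).zero_mem⟩, (add_zero c0).symm⟩⟩
    have hP0 : ((αo + 1 : Ordinal) : WithTop Ordinal) ≤ Hv u c0 := mem_gf_iff_le.mp hc0
    have hkill : ∀ (y : V) (θo : Ordinal.{uV}), RInv u A B αo b'' y →
        (((αo + 1 : Ordinal) : WithTop Ordinal) ≤ Hv u y) →
        Hv u y = (θo : WithTop Ordinal) →
        ∀ m ∈ A ⊔ B, ∀ t : F, t ≠ 0 → Hv u (m + t • (xs - m')) = (θo : WithTop Ordinal) →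
        ((θo + 1 : Ordinal) : WithTop Ordinal) ≤ Hv u (y + (m + t • (xs - m'))) → False := by
      intro y θo _ hP hθy m hm t ht hζh _
      have h1 : Hv u (m + t • (xs - m')) = min (αo : WithTop Ordinal) (Hv u m) := by
        have := (c''.vxs.smul ht).formula m hm
        rwa [Hv_smul ht, hH''] at this
      have h2 : (θo : WithTop Ordinal) ≤ (αo : WithTop Ordinal) := by
        rw [← hζh, h1]; exact min_le_left _ _
      have h3 : ((αo + 1 : Ordinal) : WithTop Ordinal) ≤ (θo : WithTop Ordinal) := hθy ▸ hP
      have h4 : αo + 1 ≤ αo := by exact_mod_cast le_trans h3 h2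
      exact absurd (Order.add_one_le_iff.mp h4) (lt_irrefl _)
    obtain ⟨y, hInv, -, hvi⟩ := repair_loop c'' hb''B
      (fun y => ((αo + 1 : Ordinal) : WithTop Ordinal) ≤ Hv u y)
      (fun y y' h hle => le_trans h hle) hkill _ c0 hInv0 hP0 (le_refl _)
    exact Concl.shift hm'M.1 (finishH c'' hE1'' hInv hvi)

/-! ### The top case -/

theorem Hv_smul_top {y : V} (hy : Hv u y = ⊤) (s : F) : Hv u (s • y) = ⊤ := by
  by_cases hs : s = 0
  · rw [hs, zero_smul, Hv_zero]
  · rw [Hv_smul hs, hy]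

theorem VP.decompM {A B : Submodule F V} (h : VP u A B) {m : V} (hm : m ∈ A ⊔ B) :
    ∃ mA ∈ A, ∃ mB ∈ B, m = mA + mB ∧ Hv u m ≤ Hv u mA ∧ Hv u m ≤ Hv u mB := by
  obtain ⟨mA, hmA, mB, hmB, rfl⟩ := Submodule.mem_sup.mp hm
  exact ⟨mA, hmA, mB, hmB, rfl, h.compA hmA hmB, h.compB hmA hmB⟩

theorem caseTop {A B : Submodule F V} {xs a b : V}
    (hvp : VP u A B) (hxs : xs ∉ A ⊔ B) (hxsD : xs ∈ Dd u)
    (haA : a ∈ A) (hbB : b ∈ B) (hdec : u xs = a + b) :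
    Concl u A B xs := by
  have huxsD : u xs ∈ Dd u := by rw [← Dd_map]; exact ⟨xs, hxsD, rfl⟩
  have habD : Hv u (a + b) = ⊤ := by rw [← hdec]; exact Hv_eq_top_iff.mpr huxsD
  have hbD : Hv u b = ⊤ :=
    top_le_iff.mp (le_trans (le_of_eq habD.symm) (hvp.compB haA hbB))
  have hbDd : b ∈ Dd u := Hv_eq_top_iff.mp hbD
  by_cases hc' : ∃ cc, cc ∈ Dd u ∧ u cc = b ∧ cc ∉ A ⊔ B
  · obtain ⟨cc, hccD, hccu, hccM⟩ := hc'
    have hccT : Hv u cc = ⊤ := Hv_eq_top_iff.mpr hccD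
    by_cases hxsc : xs ∈ (A ⊔ B) ⊔ Submodule.span F {cc}
    · -- add cc alone
      have hJ : ∀ m ∈ A ⊔ B, ∀ s t : F,
          Hv u (m + s • cc + t • (0 : V)) =
            min (Hv u m) (min (Hv u (s • cc)) (Hv u (t • (0 : V)))) := by
        intro m hm s t
        rw [smul_zero, add_zero, Hv_zero, min_comm (Hv u (s • cc)), min_eq_right le_top]
        rw [show m + s • cc = s • cc + m by abel]
        rw [(vindep_top hccT).smul_formula s m hm, min_comm]
      have hLI : ∀ m ∈ A ⊔ B, ∀ s t : F, m + s • cc + t • (0 : V) = 0 →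
          s • cc = 0 ∧ t • (0 : V) = 0 := by
        intro m hm s t h0
        refine ⟨?_, smul_zero t⟩
        rw [smul_zero, add_zero] at h0
        by_contra hcon
        have hs : s ≠ 0 := fun hh => hcon (by rw [hh, zero_smul])
        have h7 : s • cc = -m := eq_neg_of_add_eq_zero_right h0
        have h8 : cc = s⁻¹ • (-m) := by rw [← h7, inv_smul_smul₀ hs]
        exact hccM (h8 ▸ (A ⊔ B).smul_mem s⁻¹ ((A ⊔ B).neg_mem hm))
      refine conclude hvp (y := cc) (xt := 0) (by rw [hccu]; exact hbB)
        (by rw [map_zero]; exact A.zero_mem) hJ hLI ?_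
      refine SetLike.le_def.mp ?_ hxsc
      refine sup_le (sup_le ?_ ?_) ?_
      · exact le_trans le_sup_left le_sup_left
      · exact le_trans le_sup_left le_sup_right
      · exact le_trans le_sup_right le_sup_left
    · -- add cc and xs - cc
      have hxtD : xs - cc ∈ Dd u := (Dd u).sub_mem hxsD hccD
      have hxtT : Hv u (xs - cc) = ⊤ := Hv_eq_top_iff.mpr hxtD
      have hJ : ∀ m ∈ A ⊔ B, ∀ s t : F,
          Hv u (m + s • cc + t • (xs - cc)) =
            min (Hv u m) (min (Hv u (s • cc)) (Hv u (t • (xs - cc)))) := by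
        intro m hm s t
        have hsD : s • cc + t • (xs - cc) ∈ Dd u :=
          (Dd u).add_mem ((Dd u).smul_mem s hccD) ((Dd u).smul_mem t hxtD)
        rw [show m + s • cc + t • (xs - cc) = (s • cc + t • (xs - cc)) + m by abel]
        rw [(vindep_top (Hv_eq_top_iff.mpr hsD)) m hm]
        rw [Hv_eq_top_iff.mpr hsD, Hv_smul_top hccT, Hv_smul_top hxtT]
        simp
      have hLI : ∀ m ∈ A ⊔ B, ∀ s t : F, m + s • cc + t • (xs - cc) = 0 →
          s • cc = 0 ∧ t • (xs - cc) = 0 := by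
        intro m hm s t h0
        have ht : t = 0 := by
          by_contra ht
          have h7 : t • (xs - cc) = -(m + s • cc) :=
            eq_neg_of_add_eq_zero_right h0
          have h8 : xs - cc = t⁻¹ • (-(m + s • cc)) := by
            rw [← h7, inv_smul_smul₀ ht]
          refine hxsc ?_
          have h9 : xs = cc + t⁻¹ • (-(m + s • cc)) := by rw [← h8]; abel
          rw [h9]
          refine Submodule.add_mem _ ?_ ?_
          · exact le_sup_right (α := Submodule F V) (Submodule.mem_span_singleton_self cc)
          · refine Submodule.smul_mem _ _ (Submodule.neg_mem _ ?_)
            refine Submodule.add_mem _ (le_sup_left (α := Submodule F V) hm) ?_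
            exact Submodule.smul_mem _ _
              (le_sup_right (α := Submodule F V) (Submodule.mem_span_singleton_self cc))
        subst ht
        rw [zero_smul, add_zero] at h0
        rw [zero_smul]
        refine ⟨?_, rfl⟩
        by_contra hcon
        have hs : s ≠ 0 := fun hh => hcon (by rw [hh, zero_smul])
        have h7 : s • cc = -m := eq_neg_of_add_eq_zero_right h0
        have h8 : cc = s⁻¹ • (-m) := by rw [← h7, inv_smul_smul₀ hs]
        exact hccM (h8 ▸ (A ⊔ B).smul_mem s⁻¹ ((A ⊔ B).neg_mem hm))
      refine conclude hvp (y := cc) (xt := xs - cc) (by rw [hccu]; exact hbB)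
        (by rw [map_sub, hdec, hccu, add_sub_cancel_right]; exact haA) hJ hLI ?_
      have hmem : cc + (xs - cc) ∈ (A ⊔ Submodule.span F {cc}) ⊔
          (B ⊔ Submodule.span F {xs - cc}) := by
        refine Submodule.add_mem _ ?_ ?_
        · exact le_sup_left (α := Submodule F V)
            (le_sup_right (α := Submodule F V) (Submodule.mem_span_singleton_self _))
        · exact le_sup_right (α := Submodule F V)
            (le_sup_right (α := Submodule F V) (Submodule.mem_span_singleton_self _))
      simpa using hmem
  · -- all preimages of b in M
    push_neg at hc'
    obtain ⟨c0, hc0D, hc0u⟩ : ∃ c0 ∈ Dd u, u c0 = b := by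
      have := hbDd
      rw [← Dd_map] at this
      obtain ⟨c0, hc0, hc0u⟩ := this
      exact ⟨c0, hc0, hc0u⟩
    have hc0M : c0 ∈ A ⊔ B := hc' c0 hc0D hc0u
    obtain ⟨cA, hcA, cB, hcB, hceq, hHcA, hHcB⟩ := hvp.decompM hc0M
    have h1 : u cB ∈ A ⊓ B := by
      constructor
      · exact hvp.mapB ⟨cB, hcB, rfl⟩
      · have h2 : u cB = b - u cA := by rw [← hc0u, hceq, map_add]; abel
        rw [h2]
        exact B.sub_mem hbB (hvp.mapA ⟨cA, hcA, rfl⟩)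
    rw [hvp.disj, Submodule.mem_bot] at h1
    have h2 : b = u cA := by
      have h3 := hc0u
      rw [hceq, map_add, h1, add_zero] at h3
      exact h3.symm
    have hcAD : cA ∈ Dd u := by
      rw [← Hv_eq_top_iff]
      exact top_le_iff.mp (le_trans (le_of_eq (Hv_eq_top_iff.mpr hc0D).symm) hHcA)
    have hxtD : xs - cA ∈ Dd u := (Dd u).sub_mem hxsD hcAD
    have hxtT : Hv u (xs - cA) = ⊤ := Hv_eq_top_iff.mpr hxtD
    have hxtM : xs - cA ∉ A ⊔ B := by
      intro hcon
      refine hxs ?_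
      have := (A ⊔ B).add_mem hcon (le_sup_left (α := Submodule F V) hcA)
      simpa using this
    have hJ : ∀ m ∈ A ⊔ B, ∀ s t : F,
        Hv u (m + s • (0 : V) + t • (xs - cA)) =
          min (Hv u m) (min (Hv u (s • (0 : V))) (Hv u (t • (xs - cA)))) := by
      intro m hm s t
      rw [smul_zero, add_zero, Hv_zero, min_eq_right le_top]
      rw [show m + t • (xs - cA) = t • (xs - cA) + m by abel]
      rw [(vindep_top hxtT).smul_formula t m hm, min_comm]
    have hLI : ∀ m ∈ A ⊔ B, ∀ s t : F, m + s • (0 : V) + t • (xs - cA) = 0 →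
        s • (0 : V) = 0 ∧ t • (xs - cA) = 0 := by
      intro m hm s t h0
      refine ⟨smul_zero s, ?_⟩
      rw [smul_zero, add_zero] at h0
      by_contra hcon
      have ht : t ≠ 0 := fun hh => hcon (by rw [hh, zero_smul])
      have h7 : t • (xs - cA) = -m := eq_neg_of_add_eq_zero_right h0
      have h8 : xs - cA = t⁻¹ • (-m) := by rw [← h7, inv_smul_smul₀ ht]
      exact hxtM (h8 ▸ (A ⊔ B).smul_mem t⁻¹ ((A ⊔ B).neg_mem hm))
    refine conclude hvp (y := 0) (xt := xs - cA) (by rw [map_zero]; exact B.zero_mem)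
      (by rw [map_sub, hdec, ← h2, add_sub_cancel_right]; exact haA) hJ hLI ?_
    have hmem : (xs - cA) + cA ∈ (A ⊔ Submodule.span F {(0 : V)}) ⊔
        (B ⊔ Submodule.span F {xs - cA}) := by
      refine Submodule.add_mem _ ?_ ?_
      · exact le_sup_right (α := Submodule F V)
          (le_sup_right (α := Submodule F V) (Submodule.mem_span_singleton_self _))
      · exact le_sup_left (α := Submodule F V) (le_sup_left (α := Submodule F V) hcA)
    simpa using hmem

/-! ### Assembling the one-step extension -/

theorem Zsub_comm {A B : Submodule F V} {αo : Ordinal.{uV}} :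
    Zsub u B A αo = Zsub u A B αo := by
  rw [Zsub, Zsub, sup_comm B A]

theorem Concl.swap {A B : Submodule F V} {xs : V} (h : Concl u B A xs) :
    Concl u A B xs := by
  obtain ⟨A', B', hvp, hB, hA, hmem⟩ := h
  exact ⟨B', A', hvp.symm, hA, hB, by rwa [sup_comm]⟩

theorem extend1 {A B : Submodule F V} (hvp : VP u A B) {x : V}
    (hux : u x ∈ A ⊔ B) (hx : x ∉ A ⊔ B) : Concl u A B x := by
  haveI := hvp.finA; haveI := hvp.finB
  haveI : FiniteDimensional F (A ⊔ B : Submodule F V) :=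
    Submodule.finiteDimensional_sup _ _
  obtain ⟨ms, hms, hmax⟩ := coset_max (u := u) (A ⊔ B) x
  have hxsM : x + ms ∉ A ⊔ B := by
    intro hc
    refine hx ?_
    have := (A ⊔ B).sub_mem hc hms
    simpa using this
  have huM : (A ⊔ B).map u ≤ A ⊔ B := by
    rw [Submodule.map_sup]
    exact sup_le (le_trans hvp.mapA le_sup_right) (le_trans hvp.mapB le_sup_left)
  have huxs : u (x + ms) ∈ A ⊔ B := by
    rw [map_add]
    exact (A ⊔ B).add_mem hux (huM ⟨ms, hms, rfl⟩)
  obtain ⟨a, haA, b, hbB, hdec⟩ := Submodule.mem_sup.mp huxs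
  have hprop : ∀ m ∈ A ⊔ B, Hv u ((x + ms) + m) ≤ Hv u (x + ms) := by
    intro m hm
    have hrw : (x + ms) + m = x + (ms + m) := by abel
    rw [hrw]
    exact hmax (ms + m) ((A ⊔ B).add_mem hms hm)
  have hfin : Concl u A B (x + ms) := by
    by_cases hD : x + ms ∈ Dd u
    · exact caseTop hvp hxsM hD haA hbB hdec.symm
    · obtain ⟨αo, hα, -, -⟩ := mem_hv_self hD
      have c : Ctx u A B (x + ms) a b αo :=
        ⟨hvp, hxsM, hα, fun m hm => hα ▸ hprop m hm, haA, hbB, hdec.symm⟩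
      by_cases hbZ : b ∈ Zsub u A B αo
      · by_cases haZ : a ∈ Zsub u A B αo
        · exact caseHboth c haZ hbZ
        · exact caseHasym c hbZ haZ
      · by_cases haZ : a ∈ Zsub u A B αo
        · refine Concl.swap (caseHasym c.symm ?_ ?_)
          · rwa [Zsub_comm]
          · rwa [Zsub_comm]
        · exact caseL c haZ hbZ
  rw [← sub_neg_eq_add x ms] at hfin
  exact Concl.shift ((A ⊔ B).neg_mem hms) hfin

theorem extend_full (hln : ∀ x : V, ∃ n : ℕ, (u ^ n) x = 0)
    {A B : Submodule F V} (hvp : VP u A B) (x : V) : Concl u A B x := by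
  obtain ⟨n, hn⟩ := hln x
  induction n generalizing A B x with
  | zero =>
    rw [pow_zero, Module.End.one_apply] at hn
    exact ⟨A, B, hvp, le_refl _, le_refl _, hn ▸ (A ⊔ B).zero_mem⟩
  | succ n IH =>
    have hn' : (u ^ n) (u x) = 0 := by
      rw [← Module.End.mul_apply, ← pow_succ]
      exact hn
    obtain ⟨A₁, B₁, hvp₁, hA₁, hB₁, hux⟩ := IH hvp (u x) hn'
    by_cases hx : x ∈ A₁ ⊔ B₁
    · exact ⟨A₁, B₁, hvp₁, hA₁, hB₁, hx⟩
    · obtain ⟨A', B', hvp', hA', hB', hx'⟩ := extend1 hvp₁ hux hx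
      exact ⟨A', B', hvp', le_trans hA₁ hA', le_trans hB₁ hB', hx'⟩

/-! ### The recursive sequence of pairs -/

variable (u) in
noncomputable def seqP (hln : ∀ x : V, ∃ n : ℕ, (u ^ n) x = 0) (v : ℕ → V) :
    ℕ → Σ' (A B : Submodule F V), VP u A B
  | 0 => ⟨⊥, ⊥, VP.bot u⟩
  | n + 1 =>
    let p := seqP hln v n
    let h := extend_full hln p.2.2 (v n)
    ⟨h.choose, h.choose_spec.choose, h.choose_spec.choose_spec.1⟩

theorem seqP_spec (hln : ∀ x : V, ∃ n : ℕ, (u ^ n) x = 0) (v : ℕ → V) (n : ℕ) :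
    (seqP u hln v n).1 ≤ (seqP u hln v (n + 1)).1 ∧
    (seqP u hln v n).2.1 ≤ (seqP u hln v (n + 1)).2.1 ∧
    v n ∈ (seqP u hln v (n + 1)).1 ⊔ (seqP u hln v (n + 1)).2.1 := by
  have h := (extend_full hln (seqP u hln v n).2.2 (v n)).choose_spec.choose_spec
  exact ⟨h.2.1, h.2.2.1, h.2.2.2⟩

theorem seqP_mono1 (hln : ∀ x : V, ∃ n : ℕ, (u ^ n) x = 0) (v : ℕ → V) :
    Monotone fun n => (seqP u hln v n).1 :=
  monotone_nat_of_le_succ fun n => (seqP_spec hln v n).1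

theorem seqP_mono2 (hln : ∀ x : V, ∃ n : ℕ, (u ^ n) x = 0) (v : ℕ → V) :
    Monotone fun n => (seqP u hln v n).2.1 :=
  monotone_nat_of_le_succ fun n => (seqP_spec hln v n).2.1

/-- The main abstract result. -/
theorem main (hln : ∀ x : V, ∃ n : ℕ, (u ^ n) x = 0) (v : ℕ → V)
    (hv : Submodule.span F (Set.range v) = ⊤) :
    ∃ V₁ V₂ : Submodule F V, IsCompl V₁ V₂ ∧
      Submodule.map u V₁ ≤ V₂ ∧ Submodule.map u V₂ ≤ V₁ := by
  classical
  set A : Submodule F V := ⨆ n, (seqP u hln v n).1 with hA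
  set B : Submodule F V := ⨆ n, (seqP u hln v n).2.1 with hB
  have hmemA : ∀ x, x ∈ A → ∃ n, x ∈ (seqP u hln v n).1 := by
    intro x hx
    rw [hA] at hx
    exact (Submodule.mem_iSup_of_directed _ ((seqP_mono1 hln v).directed_le)).mp hx
  have hmemB : ∀ x, x ∈ B → ∃ n, x ∈ (seqP u hln v n).2.1 := by
    intro x hx
    rw [hB] at hx
    exact (Submodule.mem_iSup_of_directed _ ((seqP_mono2 hln v).directed_le)).mp hx
  refine ⟨A, B, ⟨?_, ?_⟩, ?_, ?_⟩
  · -- disjoint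
    rw [disjoint_iff]
    rw [eq_bot_iff]
    intro x hx
    obtain ⟨n₁, h₁⟩ := hmemA x hx.1
    obtain ⟨n₂, h₂⟩ := hmemB x hx.2
    have h₁' : x ∈ (seqP u hln v (max n₁ n₂)).1 := seqP_mono1 hln v (le_max_left n₁ n₂) h₁
    have h₂' : x ∈ (seqP u hln v (max n₁ n₂)).2.1 := seqP_mono2 hln v (le_max_right n₁ n₂) h₂
    have hdj := (seqP u hln v (max n₁ n₂)).2.2.disj
    have : x ∈ ((seqP u hln v (max n₁ n₂)).1 ⊓ (seqP u hln v (max n₁ n₂)).2.1 :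
        Submodule F V) := ⟨h₁', h₂'⟩
    rw [hdj] at this
    exact this
  · -- codisjoint
    rw [codisjoint_iff, eq_top_iff, ← hv]
    refine Submodule.span_le.mpr ?_
    rintro z ⟨n, rfl⟩
    have := (seqP_spec hln v n).2.2
    refine SetLike.le_def.mp ?_ this
    refine sup_le_sup ?_ ?_
    · exact le_iSup (fun n => (seqP u hln v n).1) (n + 1)
    · exact le_iSup (fun n => (seqP u hln v n).2.1) (n + 1)
  · -- map A ≤ B
    rw [hA, Submodule.map_iSup]
    refine iSup_le fun n => ?_
    exact le_trans (seqP u hln v n).2.2.mapA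
      (le_iSup (fun n => (seqP u hln v n).2.1) n)
  · rw [hB, Submodule.map_iSup]
    refine iSup_le fun n => ?_
    exact le_trans (seqP u hln v n).2.2.mapB
      (le_iSup (fun n => (seqP u hln v n).1) n)

end LNExchange

/-- Every locally nilpotent endomorphism of a countable-dimensional vector
space has the exchange property. -/
theorem locallyNilpotent_exchange
    (F V : Type*) [Field F] [AddCommGroup V] [Module F V]
    (hdim : ∃ (ι : Type) (_ : Countable ι), Nonempty (Module.Basis ι F V))
    (u : Module.End F V)
    (hln : ∀ x : V, ∃ n : ℕ, (u ^ n) x = 0) :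
    ∃ V₁ V₂ : Submodule F V, IsCompl V₁ V₂ ∧
      Submodule.map u V₁ ≤ V₂ ∧ Submodule.map u V₂ ≤ V₁ := by
  obtain ⟨ι, hι, ⟨bas⟩⟩ := hdim
  haveI : Countable ι := hι
  obtain ⟨f, hf⟩ := exists_surjective_nat (Option ι)
  set v : ℕ → V := fun n => (f n).elim 0 bas with hvdef
  have hv : Submodule.span F (Set.range v) = ⊤ := by
    refine le_antisymm le_top ?_
    rw [← bas.span_eq]
    refine le_trans (Submodule.span_mono ?_) (le_refl _)
    rintro z ⟨i, rfl⟩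
    obtain ⟨n, hn⟩ := hf (some i)
    exact ⟨n, by rw [hvdef]; simp [hn]⟩
  exact LNExchange.main hln v hv
end

section
/- Let F be a field, let V be an F-vector space of countable dimension, let u be a locally nilpotent endomorphism of V, and let (e_i)_{i∈I} be a basis of V adapted to u, meaning that for every i ∈ I, either u(e_i) = 0 or u(e_i) = e_j for some j ∈ I. Let v be an endomorphism of V such that for every i ∈ I there exists a nonzero scalar λ_i ∈ F with v(e_i) − λ_i·u(e_i) ∈ span{u^k(e_i) : k ≥ 2}. Then v is similar to u. -/
set_option linter.unusedSectionVars false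

namespace LNPS

open Submodule

variable {F V : Type*} [Field F] [AddCommGroup V] [Module F V]
variable {ι : Type} (e : Module.Basis ι F V) (u v : Module.End F V)

/-- height of a basis vector: least n with u^n (e i) = 0 -/
noncomputable def ht (i : ι) : ℕ := sInf {n | (u ^ n) (e i) = 0}

open Classical in
/-- successor index along u -/
noncomputable def nxt (i : ι) : ι :=
  if h : ∃ j, u (e i) = e j then h.choose else i

/-- span of the tail of the chain through e i -/
def Tail (i : ι) (k : ℕ) : Submodule F V :=
  span F {y | ∃ m, k ≤ m ∧ y = (u ^ m) (e i)}

lemma u_eq_nxt {i : ι} (h : ∃ j, u (e i) = e j) : u (e i) = e (nxt e u i) := by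
  rw [nxt, dif_pos h]; exact h.choose_spec

section
variable (hln : ∀ x : V, ∃ n : ℕ, (u ^ n) x = 0)
include hln

lemma ht_spec (i : ι) : (u ^ ht e u i) (e i) = 0 :=
  Nat.sInf_mem (hln (e i))

lemma ht_min {i : ι} {m : ℕ} (hm : m < ht e u i) : (u ^ m) (e i) ≠ 0 :=
  Nat.notMem_of_lt_sInf hm

lemma ht_pos (i : ι) : 1 ≤ ht e u i := by
  by_contra h
  have h0 : ht e u i = 0 := by omega
  have h1 := ht_spec e u hln i
  rw [h0, pow_zero] at h1
  exact e.ne_zero i h1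

lemma ht_of_step {i j : ι} (h : u (e i) = e j) : ht e u j + 1 = ht e u i := by
  have key : ∀ n : ℕ, (u ^ n) (e j) = (u ^ (n+1)) (e i) := by
    intro n
    rw [← h, pow_succ, Module.End.mul_apply]
  have h1 : ht e u i ≤ ht e u j + 1 := by
    apply Nat.sInf_le
    show (u ^ (ht e u j + 1)) (e i) = 0
    rw [← key, ht_spec e u hln]
  have h2 : ht e u j ≤ ht e u i - 1 := by
    apply Nat.sInf_le
    show (u ^ (ht e u i - 1)) (e j) = 0
    rw [key, Nat.sub_add_cancel (ht_pos e u hln i), ht_spec e u hln]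
  have := ht_pos e u hln i
  omega

lemma two_le_ht {i : ι} (h : u (e i) ≠ 0) : 2 ≤ ht e u i := by
  rcases Nat.lt_or_ge (ht e u i) 2 with h2 | h2
  · have h1 : ht e u i = 1 := by have := ht_pos e u hln i; omega
    have h3 := ht_spec e u hln i
    rw [h1, pow_one] at h3
    exact absurd h3 h
  · exact h2

lemma u_ne_zero_of_two_le {i : ι} (h : 2 ≤ ht e u i) : u (e i) ≠ 0 := by
  have h1 : (u ^ 1) (e i) ≠ 0 := ht_min e u hln (by omega)
  rwa [pow_one] at h1

lemma u_eq_zero_of_ht_one {i : ι} (h : ht e u i = 1) : u (e i) = 0 := by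
  have h1 := ht_spec e u hln i
  rwa [h, pow_one] at h1

section
variable (had : ∀ i : ι, u (e i) = 0 ∨ ∃ j : ι, u (e i) = e j)
include had

lemma step_nxt {i : ι} (h : u (e i) ≠ 0) : u (e i) = e (nxt e u i) :=
  u_eq_nxt e u ((had i).resolve_left h)

lemma ht_nxt {i : ι} (h : 2 ≤ ht e u i) : ht e u (nxt e u i) + 1 = ht e u i :=
  ht_of_step e u hln (step_nxt e u hln had (u_ne_zero_of_two_le e u hln h))

/-- nonzero powers of u applied to basis vectors are basis vectors of the right height -/
lemma pow_basis (m : ℕ) (i : ι) (h : (u ^ m) (e i) ≠ 0) :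
    ∃ j, (u ^ m) (e i) = e j ∧ ht e u j + m = ht e u i := by
  induction m with
  | zero => exact ⟨i, by simp, by simp⟩
  | succ n ih =>
    have hn : (u ^ n) (e i) ≠ 0 := by
      intro h0
      apply h
      rw [pow_succ', Module.End.mul_apply, h0, map_zero]
    obtain ⟨j, hj, hht⟩ := ih hn
    have hj' : u (e j) ≠ 0 := by
      intro h0; apply h
      rw [pow_succ', Module.End.mul_apply, hj, h0]
    obtain ⟨j', hj'eq⟩ := (had j).resolve_left hj'
    refine ⟨j', ?_, ?_⟩
    · rw [pow_succ', Module.End.mul_apply, hj, hj'eq]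
    · have := ht_of_step e u hln hj'eq
      omega

end
end

lemma pow_mem_Tail {i : ι} {k m : ℕ} (h : k ≤ m) : (u ^ m) (e i) ∈ Tail e u i k :=
  subset_span ⟨m, h, rfl⟩

lemma basis_mem_Tail_zero (i : ι) : e i ∈ Tail e u i 0 := by
  have h := pow_mem_Tail e u (i := i) (m := 0) (k := 0) le_rfl
  rwa [pow_zero, Module.End.one_apply] at h

lemma Tail_mono {i : ι} {k l : ℕ} (h : k ≤ l) : Tail e u i l ≤ Tail e u i k := by
  apply span_mono
  rintro y ⟨m, hm, rfl⟩
  exact ⟨m, le_trans h hm, rfl⟩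

lemma Tail_pow {i j : ι} {m : ℕ} (h : (u ^ m) (e i) = e j) (k : ℕ) :
    Tail e u j k = Tail e u i (k + m) := by
  have hpow : ∀ p : ℕ, (u ^ (p + m)) (e i) = (u ^ p) (e j) := by
    intro p
    rw [pow_add, Module.End.mul_apply, h]
  unfold Tail
  congr 1
  ext y
  constructor
  · rintro ⟨p, hp, rfl⟩
    exact ⟨p + m, by omega, (hpow p).symm⟩
  · rintro ⟨p, hp, rfl⟩
    refine ⟨p - m, by omega, ?_⟩
    rw [← hpow, Nat.sub_add_cancel (by omega)]

lemma Tail_zero_decomp {j : ι} {y : V} (hy : y ∈ Tail e u j 0) :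
    ∃ c : F, ∃ z ∈ Tail e u j 1, y = c • e j + z := by
  have hset : {y : V | ∃ m, 0 ≤ m ∧ y = (u ^ m) (e j)} =
      insert (e j) {y : V | ∃ m, 1 ≤ m ∧ y = (u ^ m) (e j)} := by
    ext x
    constructor
    · rintro ⟨m, _, rfl⟩
      rcases Nat.eq_zero_or_pos m with h0 | h1
      · subst h0; left; rw [pow_zero, Module.End.one_apply]
      · right; exact ⟨m, h1, rfl⟩
    · rintro (rfl | ⟨m, hm, rfl⟩)
      · exact ⟨0, le_rfl, by rw [pow_zero, Module.End.one_apply]⟩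
      · exact ⟨m, by omega, rfl⟩
  rw [Tail, hset, mem_span_insert] at hy
  obtain ⟨c, z, hz, rfl⟩ := hy
  exact ⟨c, z, hz, rfl⟩

section
variable (hln : ∀ x : V, ∃ n : ℕ, (u ^ n) x = 0)
  (had : ∀ i : ι, u (e i) = 0 ∨ ∃ j : ι, u (e i) = e j)
include hln

lemma tail_one_bot {i : ι} (h : ht e u i = 1) {y : V} (hy : y ∈ Tail e u i 1) : y = 0 := by
  have hu : u (e i) = 0 := u_eq_zero_of_ht_one e u hln h
  have hle : Tail e u i 1 ≤ ⊥ := by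
    apply span_le.mpr
    rintro y ⟨m, hm, rfl⟩
    have : (u ^ m) (e i) = 0 := by
      rw [show m = (m-1)+1 by omega, pow_succ, Module.End.mul_apply, hu, map_zero]
    simp [this]
  simpa using hle hy

include had

lemma repr_eq_zero_of_tail_one {i : ι} {x : V} (hx : x ∈ Tail e u i 1) :
    e.repr x i = 0 := by
  have hle : Tail e u i 1 ≤ LinearMap.ker ((Finsupp.lapply i).comp
      (e.repr : V →ₗ[F] ι →₀ F)) := by
    apply span_le.mpr
    rintro y ⟨m, hm, rfl⟩
    simp only [SetLike.mem_coe, LinearMap.mem_ker, LinearMap.comp_apply, Finsupp.lapply_apply, LinearEquiv.coe_coe]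
    by_cases h0 : (u ^ m) (e i) = 0
    · rw [h0]; simp
    · obtain ⟨j, hj, hht⟩ := pow_basis e u hln had m i h0
      rw [hj]
      simp only [Module.Basis.repr_self]
      apply Finsupp.single_eq_of_ne
      intro hji
      subst hji
      omega
  exact hle hx

lemma repr_eq_zero_of_tail_zero {i j : ι} (hji : j ≠ i) (hht : ht e u j ≤ ht e u i)
    {x : V} (hx : x ∈ Tail e u j 0) : e.repr x i = 0 := by
  have hle : Tail e u j 0 ≤ LinearMap.ker ((Finsupp.lapply i).comp
      (e.repr : V →ₗ[F] ι →₀ F)) := by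
    apply span_le.mpr
    rintro y ⟨m, hm, rfl⟩
    simp only [SetLike.mem_coe, LinearMap.mem_ker, LinearMap.comp_apply, Finsupp.lapply_apply, LinearEquiv.coe_coe]
    by_cases h0 : (u ^ m) (e j) = 0
    · rw [h0]; simp
    · obtain ⟨j', hj', hht'⟩ := pow_basis e u hln had m j h0
      rw [hj']
      simp only [Module.Basis.repr_self]
      apply Finsupp.single_eq_of_ne
      intro hj'i
      subst hj'i
      have hm0 : m = 0 := by omega
      subst hm0
      rw [pow_zero, Module.End.one_apply] at hj'
      exact hji (e.injective hj')
  exact hle hx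

section
variable (hv : ∀ i : ι, ∃ lam : F, lam ≠ 0 ∧
      v (e i) - lam • u (e i) ∈
        Submodule.span F {y : V | ∃ k : ℕ, 2 ≤ k ∧ y = (u ^ k) (e i)})
include hv

noncomputable def lam (i : ι) : F := (hv i).choose

omit hln had in
lemma lam_ne_zero (i : ι) : lam e u v hv i ≠ 0 := (hv i).choose_spec.1

omit hln had in
lemma lam_mem (i : ι) : v (e i) - lam e u v hv i • u (e i) ∈ Tail e u i 2 :=
  (hv i).choose_spec.2

omit hln had in
lemma v_basis_mem (i : ι) : v (e i) ∈ Tail e u i 1 := by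
  have h1 : v (e i) = (v (e i) - lam e u v hv i • u (e i)) + lam e u v hv i • u (e i) := by
    abel
  rw [h1]
  refine add_mem (Tail_mono e u (by omega) (lam_mem e u v hv i)) (smul_mem _ _ ?_)
  have := pow_mem_Tail e u (i := i) (m := 1) (k := 1) le_rfl
  rwa [pow_one] at this

lemma v_maps_tail {i : ι} {k : ℕ} {x : V} (hx : x ∈ Tail e u i k) :
    v x ∈ Tail e u i (k + 1) := by
  have hle : Tail e u i k ≤ (Tail e u i (k+1)).comap v := by
    apply span_le.mpr
    rintro y ⟨m, hm, rfl⟩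
    simp only [SetLike.mem_coe, mem_comap]
    by_cases h0 : (u ^ m) (e i) = 0
    · rw [h0]; simp
    · obtain ⟨j, hj, hht⟩ := pow_basis e u hln had m i h0
      rw [hj]
      have h1 : v (e j) ∈ Tail e u j 1 := v_basis_mem e u v hv j
      rw [Tail_pow e u hj 1] at h1
      exact Tail_mono e u (by omega) h1
  exact hle hx

lemma surj : ∀ n : ℕ, ∀ i : ι, ht e u i ≤ n + 1 → ∀ y ∈ Tail e u i 1,
    ∃ x ∈ Tail e u i 0, v x = y ∧ e.repr x i = e.repr y (nxt e u i) / lam e u v hv i := by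
  intro n
  induction n with
  | zero =>
    intro i hi y hy
    have h1 : ht e u i = 1 := le_antisymm hi (ht_pos e u hln i)
    have hy0 : y = 0 := tail_one_bot e u hln h1 hy
    exact ⟨0, zero_mem _, by simp [hy0], by simp [hy0]⟩
  | succ n ih =>
    intro i hi y hy
    by_cases hle : ht e u i ≤ n + 1
    · exact ih i hle y hy
    · have h2 : 2 ≤ ht e u i := by omega
      set j := nxt e u i with hj
      have hstep : u (e i) = e j := step_nxt e u hln had (u_ne_zero_of_two_le e u hln h2)
      have hstep1 : (u ^ 1) (e i) = e j := by rw [pow_one]; exact hstep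
      have htj : ht e u j + 1 = ht e u i := ht_nxt e u hln had h2
      have hTail0 : Tail e u j 0 = Tail e u i 1 := Tail_pow e u hstep1 0
      have hTail1 : Tail e u j 1 = Tail e u i 2 := Tail_pow e u hstep1 1
      rw [← hTail0] at hy
      obtain ⟨c, z, hz, hyz⟩ := Tail_zero_decomp e u hy
      have hc : e.repr y j = c := by
        rw [hyz, map_add, map_smul, Finsupp.add_apply, Finsupp.smul_apply, Module.Basis.repr_self,
          repr_eq_zero_of_tail_one e u hln had hz]
        simp
      have hlam := lam_ne_zero e u v hv i
      set w := v (e i) - lam e u v hv i • u (e i) with hw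
      have hwmem : w ∈ Tail e u j 1 := by rw [hTail1]; exact lam_mem e u v hv i
      have hv0 : v (e i) = lam e u v hv i • u (e i) + w := by rw [hw]; abel
      set x0 : V := (c / lam e u v hv i) • e i with hx0
      have hvx0 : v x0 = c • e j + (c / lam e u v hv i) • w := by
        rw [hx0, map_smul, hv0, smul_add, smul_smul, div_mul_cancel₀ c hlam, hstep]
      have hy' : y - v x0 ∈ Tail e u j 1 := by
        rw [hvx0, hyz]
        have harr : c • e j + z - (c • e j + (c / lam e u v hv i) • w)
            = z - (c / lam e u v hv i) • w := by abel
        rw [harr]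
        exact sub_mem hz (smul_mem _ _ hwmem)
      obtain ⟨x1, hx1mem, hx1v, _⟩ := ih j (by omega) (y - v x0) hy'
      refine ⟨x0 + x1, ?_, ?_, ?_⟩
      · refine add_mem (smul_mem _ _ (basis_mem_Tail_zero e u i)) ?_
        exact Tail_mono e u (by omega) (hTail0 ▸ hx1mem)
      · rw [map_add, hx1v]; abel
      · have hz1 : e.repr x1 i = 0 :=
          repr_eq_zero_of_tail_one e u hln had (hTail0 ▸ hx1mem)
        have hrx : e.repr (x0 + x1) i = c / lam e u v hv i := by
          rw [map_add, Finsupp.add_apply, hz1, hx0, map_smul, Finsupp.smul_apply,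
            Module.Basis.repr_self, Finsupp.single_eq_same]
          simp
        rw [hrx, hc]

omit had in
lemma v_zero_of_ht_one {i : ι} (h1 : ht e u i = 1) : v (e i) = 0 := by
  have hw := lam_mem e u v hv i
  have hu : u (e i) = 0 := u_eq_zero_of_ht_one e u hln h1
  rw [hu, smul_zero, sub_zero] at hw
  exact tail_one_bot e u hln h1 (Tail_mono e u (by omega) hw)

lemma guardedEx (i : ι) (y : V) : ∃ x : V,
    (y ∈ Tail e u i 1 ∧ e.repr y (nxt e u i) ≠ 0) →
    (x ∈ Tail e u i 0 ∧ v x = y ∧ e.repr x i ≠ 0) := by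
  by_cases h : y ∈ Tail e u i 1 ∧ e.repr y (nxt e u i) ≠ 0
  · obtain ⟨x, hx0, hxv, hxr⟩ := surj e u v hln had hv (ht e u i) i (by omega) y h.1
    refine ⟨x, fun _ => ⟨hx0, hxv, ?_⟩⟩
    rw [hxr]
    exact div_ne_zero h.2 (lam_ne_zero e u v hv i)
  · exact ⟨0, fun h' => absurd h' h⟩

noncomputable def fAux : ℕ → ι → V
  | 0, _ => 0
  | (n+1), i =>
    if h2 : 2 ≤ ht e u i then
      (guardedEx e u v hln had hv i (fAux n (nxt e u i))).choose
    else e i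

lemma fAux_succ (n : ℕ) (i : ι) : fAux e u v hln had hv (n+1) i =
    if 2 ≤ ht e u i then
      (guardedEx e u v hln had hv i (fAux e u v hln had hv n (nxt e u i))).choose
    else e i := by
  rw [fAux]
  split <;> simp_all

lemma fAux_stable (n : ℕ) : ∀ i : ι, ht e u i ≤ n + 1 →
    fAux e u v hln had hv (n+1) i = fAux e u v hln had hv (ht e u i) i := by
  induction n using Nat.strong_induction_on with
  | _ n ih =>
    intro i hi
    by_cases h2 : 2 ≤ ht e u i
    · have hnxt := ht_nxt e u hln had h2
      rw [fAux_succ, if_pos h2]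
      rw [show ht e u i = ht e u (nxt e u i) + 1 from by omega]
      rw [fAux_succ, if_pos h2]
      have hjn : ht e u (nxt e u i) ≤ n := by omega
      have harg : fAux e u v hln had hv n (nxt e u i)
          = fAux e u v hln had hv (ht e u (nxt e u i)) (nxt e u i) := by
        rcases Nat.eq_or_lt_of_le hjn with heq | hlt
        · rw [heq]
        · have hn1 : n - 1 + 1 = n := by
            have := ht_pos e u hln (nxt e u i); omega
          rw [← hn1]
          exact ih (n-1) (by omega) (nxt e u i) (by omega)
      rw [harg]
    · have h1 : ht e u i = 1 := by have := ht_pos e u hln i; omega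
      rw [fAux_succ, if_neg h2, h1, fAux_succ, if_neg h2]

noncomputable def ff (i : ι) : V := fAux e u v hln had hv (ht e u i) i

lemma ff_spec : ∀ n : ℕ, ∀ i : ι, ht e u i ≤ n →
    ff e u v hln had hv i ∈ Tail e u i 0 ∧
    e.repr (ff e u v hln had hv i) i ≠ 0 ∧
    v (ff e u v hln had hv i) =
      (if 2 ≤ ht e u i then ff e u v hln had hv (nxt e u i) else 0) := by
  intro n
  induction n with
  | zero => intro i hi; exact absurd hi (by have := ht_pos e u hln i; omega)
  | succ n ih =>
    intro i hi
    by_cases h2 : 2 ≤ ht e u i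
    · have hnxt := ht_nxt e u hln had h2
      have hstep : u (e i) = e (nxt e u i) :=
        step_nxt e u hln had (u_ne_zero_of_two_le e u hln h2)
      have hstep1 : (u ^ 1) (e i) = e (nxt e u i) := by rw [pow_one]; exact hstep
      have hTail0 : Tail e u (nxt e u i) 0 = Tail e u i 1 := Tail_pow e u hstep1 0
      obtain ⟨ihm, ihr, _⟩ := ih (nxt e u i) (by omega)
      have hfi : ff e u v hln had hv i =
          (guardedEx e u v hln had hv i (ff e u v hln had hv (nxt e u i))).choose := by
        rw [ff, show ht e u i = ht e u (nxt e u i) + 1 from by omega, fAux_succ, if_pos h2]; rfl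
      have hguard : ff e u v hln had hv (nxt e u i) ∈ Tail e u i 1 ∧
          e.repr (ff e u v hln had hv (nxt e u i)) (nxt e u i) ≠ 0 :=
        ⟨hTail0 ▸ ihm, ihr⟩
      obtain ⟨hm, hvv, hr⟩ :=
        (guardedEx e u v hln had hv i (ff e u v hln had hv (nxt e u i))).choose_spec hguard
      rw [← hfi] at hm hvv hr
      exact ⟨hm, hr, by rw [if_pos h2, hvv]⟩
    · have h1 : ht e u i = 1 := by have := ht_pos e u hln i; omega
      have hfi : ff e u v hln had hv i = e i := by
        rw [ff, h1, fAux_succ, if_neg h2]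
      rw [hfi, if_neg h2]
      refine ⟨basis_mem_Tail_zero e u i, ?_, v_zero_of_ht_one e u v hln hv h1⟩
      rw [Module.Basis.repr_self, Finsupp.single_eq_same]
      exact one_ne_zero

end
end

end LNPS


/-- A perturbation lemma: if u is locally nilpotent with an adapted basis
(e_i)_{i ∈ I}, and v(e_i) = λ_i u(e_i) modulo span{u^k(e_i) : k ≥ 2} with
λ_i ≠ 0 for every i, then v is similar to u. -/
theorem locallyNilpotent_perturbation_similar
    (F V : Type*) [Field F] [AddCommGroup V] [Module F V]
    (ι : Type) [Countable ι] (e : Module.Basis ι F V)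
    (u v : Module.End F V)
    (hln : ∀ x : V, ∃ n : ℕ, (u ^ n) x = 0)
    (hadapted : ∀ i : ι, u (e i) = 0 ∨ ∃ j : ι, u (e i) = e j)
    (hv : ∀ i : ι, ∃ lam : F, lam ≠ 0 ∧
      v (e i) - lam • u (e i) ∈
        Submodule.span F {y : V | ∃ k : ℕ, 2 ≤ k ∧ y = (u ^ k) (e i)}) :
    ∃ φ : V ≃ₗ[F] V, ∀ x : V, φ (u x) = v (φ x) := by
  classical
  set f : ι → V := LNPS.ff e u v hln hadapted hv with hfdef
  have spec : ∀ i, f i ∈ LNPS.Tail e u i 0 ∧ e.repr (f i) i ≠ 0 ∧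
      v (f i) = (if 2 ≤ LNPS.ht e u i then f (LNPS.nxt e u i) else 0) :=
    fun i => LNPS.ff_spec e u v hln hadapted hv (LNPS.ht e u i) i le_rfl
  set φ₀ : V →ₗ[F] V := e.constr F f with hphi
  have hφ₀ : ∀ i, φ₀ (e i) = f i := fun i => e.constr_basis F f i
  -- injectivity
  have hinj : Function.Injective φ₀ := by
    rw [← LinearMap.ker_eq_bot, LinearMap.ker_eq_bot']
    intro x hx
    by_contra hx0
    have hs : (e.repr x).support.Nonempty := by
      rw [Finsupp.support_nonempty_iff]
      intro h0
      exact hx0 (by simpa using congrArg e.repr.symm h0)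
    obtain ⟨i, hi, hmax⟩ := Finset.exists_max_image (e.repr x).support (LNPS.ht e u) hs
    have hsum : φ₀ x = ∑ j ∈ (e.repr x).support, e.repr x j • f j := by
      conv_lhs => rw [← e.linearCombination_repr x]
      rw [Finsupp.linearCombination_apply, Finsupp.sum, map_sum]
      exact Finset.sum_congr rfl fun j _ => by rw [map_smul, hφ₀]
    have hrepr : e.repr (φ₀ x) i = e.repr x i * e.repr (f i) i := by
      rw [hsum, map_sum, Finsupp.finset_sum_apply]
      rw [Finset.sum_eq_single i]
      · rw [map_smul, Finsupp.smul_apply, smul_eq_mul]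
      · intro j hj hji
        rw [map_smul, Finsupp.smul_apply, smul_eq_mul,
          LNPS.repr_eq_zero_of_tail_zero e u hln hadapted hji (hmax j hj) (spec j).1,
          mul_zero]
      · intro h; exact absurd hi h
    rw [hx, map_zero] at hrepr
    have h1 : e.repr x i ≠ 0 := Finsupp.mem_support_iff.mp hi
    exact (mul_ne_zero h1 (spec i).2.1) (by simpa using hrepr.symm)
  -- surjectivity
  have hrange : ∀ i, e i ∈ LinearMap.range φ₀ := by
    have H : ∀ n : ℕ, ∀ i, LNPS.ht e u i ≤ n → e i ∈ LinearMap.range φ₀ := by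
      intro n
      induction n with
      | zero => intro i hi; exact absurd hi (by have := LNPS.ht_pos e u hln i; omega)
      | succ n ih =>
        intro i hi
        obtain ⟨c, z, hz, hfz⟩ := LNPS.Tail_zero_decomp e u (spec i).1
        have hzr : e.repr z i = 0 := LNPS.repr_eq_zero_of_tail_one e u hln hadapted hz
        have hc : c ≠ 0 := by
          intro hc0
          apply (spec i).2.1
          rw [hfz, hc0, zero_smul, zero_add, hzr]
        have hzrange : z ∈ LinearMap.range φ₀ := by
          have hle : LNPS.Tail e u i 1 ≤ LinearMap.range φ₀ := by
            apply Submodule.span_le.mpr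
            rintro y ⟨m, hm, rfl⟩
            by_cases h0 : (u ^ m) (e i) = 0
            · rw [h0]; exact zero_mem _
            · obtain ⟨j, hj, hht⟩ := LNPS.pow_basis e u hln hadapted m i h0
              rw [hj]
              exact ih j (by omega)
          exact hle hz
        have hei : e i = c⁻¹ • (f i - z) := by
          rw [hfz]
          rw [add_sub_cancel_right, smul_smul, inv_mul_cancel₀ hc, one_smul]
        rw [hei]
        exact Submodule.smul_mem _ _ (sub_mem ⟨e i, hφ₀ i⟩ hzrange)
    intro i
    exact H (LNPS.ht e u i) i le_rfl
  have hsurj : Function.Surjective φ₀ := by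
    rw [← LinearMap.range_eq_top, eq_top_iff, ← e.span_eq]
    apply Submodule.span_le.mpr
    rintro y ⟨i, rfl⟩
    exact hrange i
  -- intertwining on the basis
  have hcomm : ∀ x : V, φ₀ (u x) = v (φ₀ x) := by
    have heq : φ₀ ∘ₗ (u : V →ₗ[F] V) = (v : V →ₗ[F] V) ∘ₗ φ₀ := by
      apply e.ext
      intro i
      rw [LinearMap.comp_apply, LinearMap.comp_apply, hφ₀]
      by_cases h2 : 2 ≤ LNPS.ht e u i
      · have hstep : u (e i) = e (LNPS.nxt e u i) :=
          LNPS.step_nxt e u hln hadapted (LNPS.u_ne_zero_of_two_le e u hln h2)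
        rw [hstep, hφ₀, (spec i).2.2, if_pos h2]
      · have h1 : LNPS.ht e u i = 1 := by have := LNPS.ht_pos e u hln i; omega
        rw [LNPS.u_eq_zero_of_ht_one e u hln h1, map_zero, (spec i).2.2, if_neg h2]
    intro x
    exact congrArg (fun g => g x) heq |>.trans rfl |>.symm ▸ rfl
  exact ⟨LinearEquiv.ofBijective φ₀ ⟨hinj, hsurj⟩, fun x => by
    show φ₀ (u x) = v (φ₀ x)
    exact hcomm x⟩
end

section
/- Let F be a field, let V be an F-vector space with a basis (e_n)_{n∈ℕ}, and let u be a locally nilpotent endomorphism of V such that the matrix of u with respect to (e_n)_{n∈ℕ} contains at most one nonzero coefficient in each of its columns and in each of its rows; that is, writing u(e_j) = Σ_i c_{i,j} e_i, for every j there is at most one i with c_{i,j} ≠ 0, and for every i there is at most one j with c_{i,j} ≠ 0. Then u is a direct sum of Jordan cells: there is a family (V_k)_{k∈K} of u-invariant subspaces of V with V = ⊕_{k∈K} V_k (internal direct sum) such that for each k the endomorphism of V_k induced by u is a Jordan cell. -/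
/-- An endomorphism of a vector space is a Jordan cell if it admits a basis
(f_0, …, f_n) (finite case) or (f_m)_{m ∈ ℕ} (infinite case) with w f_0 = 0
and w f_{i+1} = f_i. -/
def IsJordanCell (F W : Type*) [Field F] [AddCommGroup W] [Module F W]
    (w : Module.End F W) : Prop :=
  (∃ (n : ℕ) (f : Module.Basis (Fin (n + 1)) F W),
      w (f 0) = 0 ∧ ∀ i : Fin n, w (f i.succ) = f i.castSucc) ∨
  (∃ f : Module.Basis ℕ F W, w (f 0) = 0 ∧ ∀ m : ℕ, w (f (m + 1)) = f m)

section Aux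

variable {F V : Type*} [Field F] [AddCommGroup V] [Module F V]

lemma jordan_of_nat (u : Module.End F V) (W : Submodule F V)
    (f : ℕ → V) (hli : LinearIndependent F f)
    (hsp : Submodule.span F (Set.range f) = W)
    (h0 : u (f 0) = 0) (hs : ∀ m : ℕ, u (f (m + 1)) = f m)
    (hinv : ∀ x ∈ W, u x ∈ W) :
    IsJordanCell F W (u.restrict hinv) := by
  set b := (Module.Basis.span hli).map (LinearEquiv.ofEq _ _ hsp) with hbdef
  have hb : ∀ i, (b i : V) = f i := fun i => by
    rw [hbdef, Module.Basis.map_apply, LinearEquiv.coe_ofEq_apply, Module.Basis.span_apply]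
  refine Or.inr ⟨b, ?_, fun m => ?_⟩
  · apply Subtype.val_injective
    rw [LinearMap.restrict_coe_apply, hb]
    simpa using h0
  · apply Subtype.val_injective
    rw [LinearMap.restrict_coe_apply, hb, hb]
    exact hs m

lemma jordan_of_fin (u : Module.End F V) {n : ℕ} (W : Submodule F V)
    (f : Fin (n + 1) → V) (hli : LinearIndependent F f)
    (hsp : Submodule.span F (Set.range f) = W)
    (h0 : u (f 0) = 0) (hs : ∀ i : Fin n, u (f i.succ) = f i.castSucc)
    (hinv : ∀ x ∈ W, u x ∈ W) :
    IsJordanCell F W (u.restrict hinv) := by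
  set b := (Module.Basis.span hli).map (LinearEquiv.ofEq _ _ hsp) with hbdef
  have hb : ∀ i, (b i : V) = f i := fun i => by
    rw [hbdef, Module.Basis.map_apply, LinearEquiv.coe_ofEq_apply, Module.Basis.span_apply]
  refine Or.inl ⟨n, b, ?_, fun i => ?_⟩
  · apply Subtype.val_injective
    rw [LinearMap.restrict_coe_apply, hb]
    simpa using h0
  · apply Subtype.val_injective
    rw [LinearMap.restrict_coe_apply, hb, hb]
    exact hs i

end Aux

/-- A locally nilpotent endomorphism whose matrix in a basis indexed by ℕ has
at most one nonzero entry in each row and in each column is a direct sum of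
Jordan cells. -/
theorem locallyNilpotent_monomial_matrix_direct_sum_jordan
    (F V : Type*) [Field F] [AddCommGroup V] [Module F V]
    (e : Module.Basis ℕ F V) (u : Module.End F V)
    (hln : ∀ x : V, ∃ n : ℕ, (u ^ n) x = 0)
    (hcol : ∀ j i i' : ℕ, e.repr (u (e j)) i ≠ 0 → e.repr (u (e j)) i' ≠ 0 → i = i')
    (hrow : ∀ i j j' : ℕ, e.repr (u (e j)) i ≠ 0 → e.repr (u (e j')) i ≠ 0 → j = j') :
    ∃ (K : Type) (Vk : K → Submodule F V) (hinv : ∀ k, ∀ x ∈ Vk k, u x ∈ Vk k),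
      iSupIndep Vk ∧ iSup Vk = ⊤ ∧
      ∀ k, IsJordanCell F (Vk k) (u.restrict (hinv k)) := by
  classical
  -- Step 1: each u (e j) is a scalar multiple of a basis vector.
  have hstep : ∀ j : ℕ, ∃ (i : ℕ) (b : F), u (e j) ≠ 0 → (b ≠ 0 ∧ u (e j) = b • e i) := by
    intro j
    by_cases h : u (e j) = 0
    · exact ⟨0, 0, fun h' => absurd h h'⟩
    · have h1 : e.repr (u (e j)) ≠ 0 := fun hr => h (by
        have := congrArg e.repr.symm (hr)
        simpa using this)
      obtain ⟨i, hi⟩ := Finsupp.ne_iff.mp h1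
      have hi' : e.repr (u (e j)) i ≠ 0 := by simpa using hi
      refine ⟨i, e.repr (u (e j)) i, fun _ => ⟨hi', ?_⟩⟩
      have hsingle : e.repr (u (e j)) = Finsupp.single i (e.repr (u (e j)) i) := by
        ext i'
        rcases eq_or_ne i' i with rfl | hne
        · simp
        · rw [Finsupp.single_apply, if_neg (fun hh => hne hh.symm)]
          by_contra h'
          exact hne (hcol j i' i h' hi')
      calc u (e j) = e.repr.symm (e.repr (u (e j))) := by simp
        _ = e.repr.symm (Finsupp.single i (e.repr (u (e j)) i)) := by rw [← hsingle]
        _ = (e.repr (u (e j)) i) • e i := by rw [e.repr_symm_single]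
  choose s a hsa using hstep
  have hreprv : ∀ j, u (e j) ≠ 0 → e.repr (u (e j)) (s j) = a j := by
    intro j hj
    rw [(hsa j hj).2, map_smul, e.repr_self]
    simp
  have hinj : ∀ j j', u (e j) ≠ 0 → u (e j') ≠ 0 → s j = s j' → j = j' := by
    intro j j' hj hj' hss
    refine hrow (s j) j j' (by rw [hreprv j hj]; exact (hsa j hj).1) ?_
    rw [hss, hreprv j' hj']; exact (hsa j' hj').1
  -- Step 2: termination of forward orbits.
  have hpow : ∀ (n : ℕ) (j : ℕ), (∀ k < n, u (e (s^[k] j)) ≠ 0) →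
      ∃ b : F, b ≠ 0 ∧ (u ^ n) (e j) = b • e (s^[n] j) := by
    intro n
    induction n with
    | zero => intro j _; exact ⟨1, one_ne_zero, by simp⟩
    | succ n ih =>
      intro j hv
      obtain ⟨b, hb, hbe⟩ := ih j (fun k hk => hv k (hk.trans (Nat.lt_succ_self n)))
      have hP : u (e (s^[n] j)) ≠ 0 := hv n (Nat.lt_succ_self n)
      refine ⟨b * a (s^[n] j), mul_ne_zero hb (hsa _ hP).1, ?_⟩
      have h1 : (u ^ (n + 1)) (e j) = u ((u ^ n) (e j)) := by
        rw [pow_succ']; rfl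
      rw [h1, hbe, map_smul, (hsa _ hP).2, Function.iterate_succ_apply', smul_smul]
  have hterm : ∀ j : ℕ, ∃ n, u (e (s^[n] j)) = 0 := by
    intro j
    obtain ⟨n, hn⟩ := hln (e j)
    by_contra hcon
    push_neg at hcon
    obtain ⟨b, hb, hbe⟩ := hpow n j (fun k _ => hcon k)
    rw [hn] at hbe
    rcases smul_eq_zero.mp hbe.symm with h | h
    · exact hb h
    · exact e.ne_zero _ h
  -- head function
  let hd : ℕ → ℕ := fun j => s^[Nat.find (hterm j)] j
  have hhd0 : ∀ j, u (e (hd j)) = 0 := fun j => Nat.find_spec (hterm j)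
  have hN0 : ∀ j, u (e j) = 0 → Nat.find (hterm j) = 0 := by
    intro j hj
    rw [Nat.find_eq_zero]
    simpa using hj
  have hNstep : ∀ j, u (e j) ≠ 0 → Nat.find (hterm j) = Nat.find (hterm (s j)) + 1 := by
    intro j hj
    rw [Nat.find_eq_iff]
    constructor
    · rw [Function.iterate_succ_apply]
      exact Nat.find_spec (hterm (s j))
    · intro k hk
      match k with
      | 0 => simpa using hj
      | k + 1 =>
        rw [Function.iterate_succ_apply]
        exact Nat.find_min (hterm (s j)) (by omega)
  have hhds : ∀ j, u (e j) ≠ 0 → hd (s j) = hd j := by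
    intro j hj
    show s^[Nat.find (hterm (s j))] (s j) = s^[Nat.find (hterm j)] j
    rw [hNstep j hj, Function.iterate_succ_apply]
  have hhdfix : ∀ j, u (e j) = 0 → hd j = j := by
    intro j hj
    show s^[Nat.find (hterm j)] j = j
    rw [hN0 j hj]
    rfl
  -- predecessor function
  have hpre : ∀ t : ℕ, ∃ j : ℕ, (∃ j', u (e j') ≠ 0 ∧ s j' = t) → (u (e j) ≠ 0 ∧ s j = t) := by
    intro t
    by_cases hQ : ∃ j', u (e j') ≠ 0 ∧ s j' = t
    · obtain ⟨j', h⟩ := hQ; exact ⟨j', fun _ => h⟩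
    · exact ⟨0, fun h => absurd h hQ⟩
  choose p hp using hpre
  -- the subspaces
  have hinv : ∀ (k : {h : ℕ // u (e h) = 0}) (x : V),
      x ∈ Submodule.span F (e '' {j | hd j = k.1}) →
      u x ∈ Submodule.span F (e '' {j | hd j = k.1}) := by
    intro k
    have hle : Submodule.span F (e '' {j | hd j = k.1}) ≤
        Submodule.comap u (Submodule.span F (e '' {j | hd j = k.1})) := by
      rw [Submodule.span_le]
      rintro x ⟨j, hj, rfl⟩
      simp only [SetLike.mem_coe, Submodule.mem_comap]
      by_cases hj0 : u (e j) = 0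
      · simp [hj0]
      · rw [(hsa j hj0).2]
        refine Submodule.smul_mem _ _ (Submodule.subset_span ⟨s j, ?_, rfl⟩)
        show hd (s j) = k.1
        rw [hhds j hj0]
        exact hj
    exact fun x hx => hle hx
  refine ⟨{h : ℕ // u (e h) = 0}, fun k => Submodule.span F (e '' {j | hd j = k.1}),
    hinv, ?_, ?_, ?_⟩
  · -- independence
    intro k
    rw [Submodule.disjoint_def]
    intro x hx hx'
    have h1 : ↑(e.repr x).support ⊆ {j | hd j = k.1} := e.mem_span_image.mp hx
    have hsup : (⨆ (k') (_ : k' ≠ k), Submodule.span F (e '' {j | hd j = k'.1})) ≤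
        Submodule.span F (e '' {j | hd j ≠ k.1}) := by
      refine iSup_le fun k' => iSup_le fun hne => ?_
      refine Submodule.span_mono (Set.image_mono ?_)
      intro j hj
      show hd j ≠ k.1
      rw [hj]
      exact fun hh => hne (Subtype.ext hh)
    have h2 : x ∈ Submodule.span F (e '' {j | hd j ≠ k.1}) := hsup hx'
    have h3 : ↑(e.repr x).support ⊆ {j | hd j ≠ k.1} := e.mem_span_image.mp h2
    have h4 : e.repr x = 0 := by
      ext i
      by_contra hne0
      have hi : i ∈ (e.repr x).support := Finsupp.mem_support_iff.mpr (by simpa using hne0)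
      exact (h3 hi) (h1 hi)
    exact e.repr.map_eq_zero_iff.mp h4
  · -- supremum is top
    rw [eq_top_iff, ← e.span_eq, Submodule.span_le]
    rintro x ⟨j, rfl⟩
    exact SetLike.mem_coe.mpr (Submodule.mem_iSup_of_mem ⟨hd j, hhd0 j⟩
      (Submodule.subset_span ⟨j, rfl, rfl⟩))
  · -- each piece is a Jordan cell
    rintro ⟨h, hh⟩
    -- chain lemmas
    have c1 : ∀ (k m : ℕ), k ≤ m → (∀ i < m, ∃ j', u (e j') ≠ 0 ∧ s j' = p^[i] h) →
        s^[k] (p^[m] h) = p^[m - k] h := by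
      intro k
      induction k with
      | zero => intro m _ _; simp
      | succ k ih =>
        intro m hk hv
        obtain ⟨m, rfl⟩ : ∃ m', m = m' + 1 := ⟨m - 1, by omega⟩
        rw [Function.iterate_succ_apply]
        have hs1 : s (p^[m + 1] h) = p^[m] h := by
          rw [Function.iterate_succ_apply']
          exact (hp (p^[m] h) (hv m (by omega))).2
        rw [hs1, ih m (by omega) (fun i hi => hv i (by omega))]
        congr 1
        omega
    have c2 : ∀ m : ℕ, (∀ i < m, ∃ j', u (e j') ≠ 0 ∧ s j' = p^[i] h) →
        Nat.find (hterm (p^[m] h)) = m := by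
      intro m hv
      rw [Nat.find_eq_iff]
      constructor
      · rw [c1 m m le_rfl hv]
        simpa using hh
      · intro k hk hzero
        rw [c1 k m hk.le hv] at hzero
        have h1 : m - k = (m - k - 1) + 1 := by omega
        rw [h1, Function.iterate_succ_apply'] at hzero
        exact (hp _ (hv (m - k - 1) (by omega))).1 hzero
    have c3 : ∀ m : ℕ, (∀ i < m, ∃ j', u (e j') ≠ 0 ∧ s j' = p^[i] h) →
        hd (p^[m] h) = h := by
      intro m hv
      show s^[Nat.find (hterm (p^[m] h))] (p^[m] h) = h
      rw [c2 m hv, c1 m m le_rfl hv]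
      simp
    have c4 : ∀ (n : ℕ) (j : ℕ), Nat.find (hterm j) = n → hd j = h →
        (∀ i < n, ∃ j', u (e j') ≠ 0 ∧ s j' = p^[i] h) ∧ p^[n] h = j := by
      intro n
      induction n with
      | zero =>
        intro j hN hhd
        have hjh : j = h := by
          rw [← hhd]
          show j = s^[Nat.find (hterm j)] j
          rw [hN]
          rfl
        exact ⟨fun i hi => absurd hi (Nat.not_lt_zero i), by simp [hjh]⟩
      | succ n ih =>
        intro j hN hhd
        have hj : u (e j) ≠ 0 := by
          intro h0
          rw [hN0 j h0] at hN
          omega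
        have hNs : Nat.find (hterm (s j)) = n := by
          have := hNstep j hj
          omega
        have hhds' : hd (s j) = h := by rw [hhds j hj]; exact hhd
        obtain ⟨hv, hgn⟩ := ih (s j) hNs hhds'
        have hQn : ∃ j', u (e j') ≠ 0 ∧ s j' = p^[n] h := ⟨j, hj, by rw [hgn]⟩
        have hv' : ∀ i < n + 1, ∃ j', u (e j') ≠ 0 ∧ s j' = p^[i] h := by
          intro i hi
          rcases Nat.lt_succ_iff_lt_or_eq.mp hi with h' | h'
          · exact hv i h'
          · rw [h']; exact hQn
        refine ⟨hv', ?_⟩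
        rw [Function.iterate_succ_apply']
        have hpp := hp (p^[n] h) hQn
        exact hinj _ j hpp.1 hj (by rw [hpp.2, hgn])
    -- scaling coefficients
    let lam : ℕ → F := fun m => Nat.rec (motive := fun _ => F) 1
      (fun m ih => ih * (a (p^[m + 1] h))⁻¹) m
    have hlam_ne : ∀ m : ℕ, (∀ i < m, ∃ j', u (e j') ≠ 0 ∧ s j' = p^[i] h) → lam m ≠ 0 := by
      intro m
      induction m with
      | zero => intro _; exact one_ne_zero
      | succ m ih =>
        intro hv
        have h1 : u (e (p^[m + 1] h)) ≠ 0 := by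
          rw [Function.iterate_succ_apply']
          exact (hp _ (hv m (Nat.lt_succ_self m))).1
        exact mul_ne_zero (ih fun i hi => hv i (by omega)) (inv_ne_zero (hsa _ h1).1)
    have hustep : ∀ m : ℕ, (∃ j', u (e j') ≠ 0 ∧ s j' = p^[m] h) →
        u (lam (m + 1) • e (p^[m + 1] h)) = lam m • e (p^[m] h) := by
      intro m hQ
      have hP : u (e (p^[m + 1] h)) ≠ 0 := by
        rw [Function.iterate_succ_apply']
        exact (hp _ hQ).1
      have hsp1 : s (p^[m + 1] h) = p^[m] h := by
        rw [Function.iterate_succ_apply']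
        exact (hp _ hQ).2
      rw [map_smul, (hsa _ hP).2, hsp1, smul_smul]
      have hcoef : lam (m + 1) * a (p^[m + 1] h) = lam m := by
        show lam m * (a (p^[m + 1] h))⁻¹ * a (p^[m + 1] h) = lam m
        exact inv_mul_cancel_right₀ (hsa _ hP).1 _
      rw [hcoef]
    have hf0 : u (lam 0 • e (p^[0] h)) = 0 := by
      show u ((1 : F) • e h) = 0
      rw [one_smul]
      exact hh
    by_cases hfin : ∀ m : ℕ, ∃ j', u (e j') ≠ 0 ∧ s j' = p^[m] h
    · -- infinite Jordan cell
      have hall : ∀ m, ∀ i < m, ∃ j', u (e j') ≠ 0 ∧ s j' = p^[i] h := fun m i _ => hfin i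
      have hginj : Function.Injective (fun m : ℕ => p^[m] h) := by
        intro m m' hmm
        have h1 := c2 m (hall m)
        have h2 := c2 m' (hall m')
        simp only at hmm
        rw [hmm, h2] at h1
        omega
      have hli0 : LinearIndependent F (fun m : ℕ => e (p^[m] h)) :=
        e.linearIndependent.comp _ hginj
      have hli : LinearIndependent F (fun m : ℕ => lam m • e (p^[m] h)) := by
        have := hli0.units_smul (fun m => Units.mk0 (lam m) (hlam_ne m (hall m)))
        convert this using 1
        funext m
        rfl
      have hspan : Submodule.span F (Set.range (fun m : ℕ => lam m • e (p^[m] h))) =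
          Submodule.span F (e '' {j | hd j = h}) := by
        apply le_antisymm
        · rw [Submodule.span_le]
          rintro x ⟨m, rfl⟩
          exact Submodule.smul_mem _ _ (Submodule.subset_span ⟨p^[m] h, c3 m (hall m), rfl⟩)
        · rw [Submodule.span_le]
          rintro x ⟨j, hj, rfl⟩
          obtain ⟨hv, hgm⟩ := c4 (Nat.find (hterm j)) j rfl hj
          have hkey : e j = (lam (Nat.find (hterm j)))⁻¹ •
              (lam (Nat.find (hterm j)) • e (p^[Nat.find (hterm j)] h)) := by
            rw [smul_smul, inv_mul_cancel₀ (hlam_ne _ (hall _)), one_smul, hgm]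
          rw [hkey]
          exact Submodule.smul_mem _ _ (Submodule.subset_span ⟨_, rfl⟩)
      exact jordan_of_nat u _ _ hli hspan hf0 (fun m => hustep m (hfin m)) (hinv ⟨h, hh⟩)
    · -- finite Jordan cell
      rw [not_forall] at hfin
      have hv : ∀ i < Nat.find hfin, ∃ j', u (e j') ≠ 0 ∧ s j' = p^[i] h :=
        fun i hi => not_not.mp (Nat.find_min hfin hi)
      set M := Nat.find hfin with hM
      have hvm : ∀ m : ℕ, m ≤ M → ∀ i < m, ∃ j', u (e j') ≠ 0 ∧ s j' = p^[i] h :=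
        fun m hm i hi => hv i (by omega)
      have hginj : Function.Injective (fun i : Fin (M + 1) => p^[(i : ℕ)] h) := by
        intro m m' hmm
        have h1 := c2 (m : ℕ) (hvm _ (by omega))
        have h2 := c2 (m' : ℕ) (hvm _ (by omega))
        simp only at hmm
        rw [hmm, h2] at h1
        exact Fin.ext (by omega)
      have hli0 : LinearIndependent F (fun i : Fin (M + 1) => e (p^[(i : ℕ)] h)) :=
        e.linearIndependent.comp _ hginj
      have hli : LinearIndependent F (fun i : Fin (M + 1) => lam i • e (p^[(i : ℕ)] h)) := by
        have := hli0.units_smul (fun i : Fin (M + 1) =>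
          Units.mk0 (lam i) (hlam_ne i (hvm _ (by omega))))
        convert this using 1
        funext m
        rfl
      have hspan : Submodule.span F
          (Set.range (fun i : Fin (M + 1) => lam i • e (p^[(i : ℕ)] h))) =
          Submodule.span F (e '' {j | hd j = h}) := by
        apply le_antisymm
        · rw [Submodule.span_le]
          rintro x ⟨m, rfl⟩
          exact Submodule.smul_mem _ _
            (Submodule.subset_span ⟨p^[(m : ℕ)] h, c3 _ (hvm _ (by omega)), rfl⟩)
        · rw [Submodule.span_le]
          rintro x ⟨j, hj, rfl⟩
          obtain ⟨hv', hgm⟩ := c4 (Nat.find (hterm j)) j rfl hj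
          have hmle : Nat.find (hterm j) ≤ M := by
            by_contra hgt
            exact (Nat.find_spec hfin) (hv' M (by omega))
          have hkey : e j = (lam (Nat.find (hterm j)))⁻¹ •
              (lam ((⟨Nat.find (hterm j), by omega⟩ : Fin (M + 1)) : ℕ) •
                e (p^[((⟨Nat.find (hterm j), by omega⟩ : Fin (M + 1)) : ℕ)] h)) := by
            simp only
            rw [smul_smul, inv_mul_cancel₀ (hlam_ne _ (hvm _ hmle)), one_smul, hgm]
          rw [hkey]
          exact Submodule.smul_mem _ _
            (Submodule.subset_span ⟨⟨Nat.find (hterm j), by omega⟩, rfl⟩)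
      have hf0' : u ((fun i : Fin (M + 1) => lam i • e (p^[(i : ℕ)] h)) 0) = 0 := by
        simpa using hf0
      have hfs : ∀ i : Fin M,
          u ((fun i : Fin (M + 1) => lam i • e (p^[(i : ℕ)] h)) i.succ) =
          (fun i : Fin (M + 1) => lam i • e (p^[(i : ℕ)] h)) i.castSucc := by
        intro i
        have hQ := hv (i : ℕ) i.isLt
        simpa [Fin.val_succ, Fin.coe_castSucc] using hustep (i : ℕ) hQ
      exact jordan_of_fin u _ _ hli hspan hf0' hfs (hinv ⟨h, hh⟩)
end
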